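/- arXiv:1710.10908 — 4 statements merged into one kernel-verified Lean document; each statement's English description precedes it below -/
import Mathlib

section
/- For every prime p, every S-ring over a cyclic group of order p is cyclotomic. -/
open scoped Pointwise

/-- The element `\underline{X} = Σ_{x∈X} x` of the integral group ring `ℤG`. -/
noncomputable def grpSum {G : Type*} [Group G] [Fintype G] (X : Set G) :
    MonoidAlgebra ℤ G :=
  ∑ x : G, X.indicator (fun g => MonoidAlgebra.single g (1 : ℤ)) x

/-- A Schur ring (S-ring) over a finite group `G`, described by its partition
into basic sets: (S1) `{1}` is a basic set, (S2) the class of basic sets is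
closed under inverses, (S3) the ℤ-span of the sums `\underline{X}` is closed
under multiplication (i.e. is a subring of `ℤG`). -/
structure SchurRing (G : Type*) [Group G] [Fintype G] where
  basicSets : Set (Set G)
  nonempty_mem : ∀ X ∈ basicSets, X.Nonempty
  cover : ∀ g : G, ∃ X ∈ basicSets, g ∈ X
  disjoint' : ∀ X ∈ basicSets, ∀ Y ∈ basicSets, X ≠ Y → X ∩ Y = ∅
  one_mem : {(1 : G)} ∈ basicSets
  inv_mem : ∀ X ∈ basicSets, X⁻¹ ∈ basicSets
  mul_mem : ∀ X ∈ basicSets, ∀ Y ∈ basicSets,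
    grpSum X * grpSum Y ∈ Submodule.span ℤ (grpSum '' basicSets)

namespace SchurRing

variable {G : Type*} [Group G] [Fintype G]

/-- An `𝒜`-set: a union of basic sets. -/
def IsASet (A : SchurRing G) (S : Set G) : Prop :=
  ∃ T ⊆ A.basicSets, S = ⋃₀ T

/-- An `𝒜`-subgroup: a subgroup that is an `𝒜`-set. -/
def IsASubgroup (A : SchurRing G) (H : Subgroup G) : Prop :=
  A.IsASet (H : Set G)

/-- `𝒜` is schurian: its basic sets are the orbits of the stabilizer of `1`
in some group `K` with `G_right ≤ K ≤ Sym(G)`. -/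
def IsSchurian (A : SchurRing G) : Prop :=
  ∃ K : Subgroup (Equiv.Perm G), (∀ g : G, Equiv.mulRight g ∈ K) ∧
    A.basicSets = Set.range fun x : G =>
      MulAction.orbit (MulAction.stabilizer K (1 : G)) x

/-- `𝒜` is cyclotomic: its basic sets are the orbits of a subgroup of `Aut(G)`. -/
def IsCyclotomic (A : SchurRing G) : Prop :=
  ∃ M : Subgroup (MulAut G),
    A.basicSets = Set.range fun x : G => MulAction.orbit M x

/-- `𝒜` is trivial: its basic sets are `{1}` and `G ∖ {1}`. -/
def IsTrivial (A : SchurRing G) : Prop :=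
  A.basicSets ⊆ {{(1 : G)}, {(1 : G)}ᶜ}

/-- `𝒜 = 𝒜_H ⊗ 𝒜_K`: an internal tensor product decomposition of `𝒜`
with respect to the internal direct product `G = H × K`. -/
def IsTensorDecomp (A : SchurRing G) (H K : Subgroup G) : Prop :=
  A.IsASubgroup H ∧ A.IsASubgroup K ∧ H ⊓ K = ⊥ ∧ H ⊔ K = ⊤ ∧
  ∀ X ∈ A.basicSets, ∃ X₁ ∈ A.basicSets, ∃ X₂ ∈ A.basicSets,
    X₁ ⊆ (H : Set G) ∧ X₂ ⊆ (K : Set G) ∧ X = X₁ * X₂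

/-- `𝒜` is the `U/L`-wreath product: `U`, `L` are `𝒜`-subgroups, `L ⊴ G`,
`L ≤ U`, and `L ≤ rad(X)` for every basic set `X` outside `U`. -/
def IsWreathSection (A : SchurRing G) (U L : Subgroup G) : Prop :=
  A.IsASubgroup U ∧ A.IsASubgroup L ∧ L ≤ U ∧ L.Normal ∧
  ∀ X ∈ A.basicSets, ¬ X ⊆ (U : Set G) →
    ∀ g ∈ L, (g * ·) '' X = X ∧ (· * g) '' X = X

end SchurRing

/-- A finite group is a Schur group if every S-ring over it is schurian. -/
def IsSchurGroup (G : Type*) [Group G] [Fintype G] : Prop :=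
  ∀ A : SchurRing G, A.IsSchurian

/-- A Cayley isomorphism between S-rings: a group isomorphism mapping the
basic sets of `𝒜` onto the basic sets of `𝒜'`. -/
def IsCayleyIso {G G' : Type*} [Group G] [Fintype G] [Group G'] [Fintype G']
    (A : SchurRing G) (A' : SchurRing G') (f : G ≃* G') : Prop :=
  (fun X : Set G => ⇑f '' X) '' A.basicSets = A'.basicSets
namespace SRingCp
open scoped Classical

open Module

variable (p : ℕ) [Fact p.Prime]

def pq : ℕ+ := ⟨p, Nat.Prime.pos Fact.out⟩

abbrev KK : Type := CyclotomicField (pq p) ℚ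

instance : IsCyclotomicExtension {((pq p : ℕ+) : ℕ)} ℚ (KK p) :=
  CyclotomicField.instIsCyclotomicExtensionSingletonNatSetOfCharZero _ ℚ

noncomputable def zz : KK p := IsCyclotomicExtension.zeta (pq p) ℚ (KK p)

lemma zz_prim : IsPrimitiveRoot (zz p) ((pq p : ℕ+) : ℕ) :=
  IsCyclotomicExtension.zeta_spec (pq p) ℚ (KK p)

lemma zz_primN : IsPrimitiveRoot (zz p) p := zz_prim p

lemma zz_pow_p : zz p ^ p = 1 := (zz_primN p).pow_eq_one

lemma zz_pow_mod (n : ℕ) : zz p ^ (n % p) = zz p ^ n := by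
  conv_rhs => rw [← Nat.div_add_mod n p]
  rw [pow_add, pow_mul, zz_pow_p, one_pow, one_mul]

noncomputable def ee : Multiplicative (ZMod p) →* KK p where
  toFun x := zz p ^ (x.toAdd).val
  map_one' := by
    simp [toAdd_one, ZMod.val_zero]
  map_mul' x y := by
    show zz p ^ (x.toAdd + y.toAdd).val = _
    rw [ZMod.val_add, zz_pow_mod, pow_add]

noncomputable def pihom : MonoidAlgebra ℤ (Multiplicative (ZMod p)) →ₐ[ℤ] KK p :=
  MonoidAlgebra.lift ℤ _ _ (ee p)

noncomputable def eta (X : Set (Multiplicative (ZMod p))) : KK p :=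
  ∑ x : Multiplicative (ZMod p), X.indicator (fun g => ee p g) x

lemma pihom_grpSum (X : Set (Multiplicative (ZMod p))) : pihom p (grpSum X) = eta p X := by
  rw [grpSum, map_sum, eta]
  refine Finset.sum_congr rfl fun x _ => ?_
  by_cases hx : x ∈ X
  · rw [Set.indicator_of_mem hx, Set.indicator_of_mem hx]
    simp [pihom, MonoidAlgebra.lift_single]
  · rw [Set.indicator_of_notMem hx, Set.indicator_of_notMem hx, map_zero]

lemma eta_singleton_one : eta p {(1 : Multiplicative (ZMod p))} = 1 := by
  rw [eta]
  rw [Finset.sum_eq_single (1 : Multiplicative (ZMod p))]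
  · simp
  · intro b _ hb
    rw [Set.indicator_of_notMem (by simpa using hb)]
  · simp

noncomputable def pbb : PowerBasis ℚ (KK p) := (zz_prim p).powerBasis ℚ

lemma finrank_KK : finrank ℚ (KK p) = p - 1 := by
  rw [IsCyclotomicExtension.finrank (KK p)
    (Polynomial.cyclotomic.irreducible_rat (pq p).pos)]
  show p.totient = p - 1
  exact Nat.totient_prime Fact.out

lemma pbb_dim : (pbb p).dim = p - 1 := by
  rw [← (pbb p).finrank, finrank_KK]

lemma zz_ne_zero : zz p ≠ 0 := by
  intro h
  have h1 := (zz_primN p).pow_eq_one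
  rw [h, zero_pow (Nat.Prime.ne_zero (Fact.out : p.Prime))] at h1
  exact zero_ne_one h1

lemma lin_ind :
    LinearIndependent ℚ (fun a : {a : ZMod p // a ≠ 0} => zz p ^ (a : ZMod p).val) := by
  have h1 : LinearIndependent ℚ (pbb p).basis := (pbb p).basis.linearIndependent
  have h2 := h1.map' (LinearMap.mulLeft ℚ (zz p))
    (LinearMap.ker_eq_bot.2 (mul_right_injective₀ (zz_ne_zero p)))
  have hdim := pbb_dim p
  set n := (pbb p).dim with hn
  have hj : Function.Injective
      (fun a : {a : ZMod p // a ≠ 0} => (⟨(a : ZMod p).val - 1, by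
        have h1 := ZMod.val_lt (a : ZMod p)
        have ha : (a : ZMod p).val ≠ 0 := fun h => a.2 ((ZMod.val_eq_zero _).1 h)
        omega⟩ : Fin n)) := by
    intro a b hab
    have ha : (a : ZMod p).val ≠ 0 := fun h => a.2 ((ZMod.val_eq_zero _).1 h)
    have hb : (b : ZMod p).val ≠ 0 := fun h => b.2 ((ZMod.val_eq_zero _).1 h)
    have : (a : ZMod p).val = (b : ZMod p).val := by
      have := Fin.mk.injEq (((a : ZMod p)).val - 1) _ (((b : ZMod p)).val - 1) _ ▸ hab
      simp only [Fin.mk.injEq] at hab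
      omega
    exact Subtype.ext (ZMod.val_injective p this)
  have h3 := (h2.comp _ hj)
  convert h3 using 1
  funext a
  have ha : (a : ZMod p).val ≠ 0 := fun h => a.2 ((ZMod.val_eq_zero _).1 h)
  show zz p ^ (a : ZMod p).val = LinearMap.mulLeft ℚ (zz p) ((pbb p).basis _)
  rw [PowerBasis.coe_basis]
  show zz p ^ (a : ZMod p).val = zz p * (pbb p).gen ^ (((a : ZMod p).val - 1))
  have hgen : (pbb p).gen = zz p := (zz_prim p).powerBasis_gen ℚ
  rw [hgen, ← pow_succ']
  congr 1
  omega
  all_goals rfl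




lemma ee_ofAdd (a : ZMod p) : ee p (Multiplicative.ofAdd a) = zz p ^ a.val := by
  show zz p ^ (Multiplicative.ofAdd a).toAdd.val = _
  rw [toAdd_ofAdd]

lemma eta_eq_sum (X : Set (Multiplicative (ZMod p))) :
    eta p X = ∑ a : ZMod p,
      (if Multiplicative.ofAdd a ∈ X then (1 : ℚ) else 0) • zz p ^ a.val := by
  rw [eta]
  rw [← Fintype.sum_equiv Multiplicative.ofAdd
    (fun a : ZMod p => X.indicator (fun g => ee p g) (Multiplicative.ofAdd a))
    (fun x => X.indicator (fun g => ee p g) x) (fun a => rfl)]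
  refine Finset.sum_congr rfl fun a _ => ?_
  by_cases hx : Multiplicative.ofAdd a ∈ X
  · rw [Set.indicator_of_mem hx, if_pos hx, ee_ofAdd]; exact (one_smul ℚ _).symm
  · rw [Set.indicator_of_notMem hx, if_neg hx]; exact (zero_smul ℚ _).symm

lemma eta_inj {X Y : Set (Multiplicative (ZMod p))}
    (hX : (1 : Multiplicative (ZMod p)) ∉ X) (hY : (1 : Multiplicative (ZMod p)) ∉ Y)
    (h : eta p X = eta p Y) : X = Y := by
  classical
  set cX : ZMod p → ℚ := fun a => if Multiplicative.ofAdd a ∈ X then (1 : ℚ) else 0 with hcX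
  set cY : ZMod p → ℚ := fun a => if Multiplicative.ofAdd a ∈ Y then (1 : ℚ) else 0 with hcY
  have hsum : ∑ a : ZMod p, (cX a - cY a) • zz p ^ a.val = 0 := by
    have h1 := eta_eq_sum p X
    have h2 := eta_eq_sum p Y
    rw [h1, h2] at h
    have e : ∀ a : ZMod p, (cX a - cY a) • zz p ^ a.val
        = cX a • zz p ^ a.val - cY a • zz p ^ a.val := fun a => sub_smul _ _ _
    simp only [e]
    rw [Finset.sum_sub_distrib, h, sub_self]
  have h0 : cX 0 - cY 0 = 0 := by
    have : (Multiplicative.ofAdd (0 : ZMod p)) = 1 := rfl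
    simp [hcX, hcY, this, hX, hY]
  have hsub : ∑ a : {a : ZMod p // a ≠ 0}, (cX a - cY a) • zz p ^ (a : ZMod p).val = 0 := by
    rw [← Finset.sum_subtype (Finset.univ.erase (0 : ZMod p))
      (p := fun a : ZMod p => a ≠ 0) (by simp)
      (fun a : ZMod p => (cX a - cY a) • zz p ^ a.val)]
    have := Finset.add_sum_erase Finset.univ
      (fun a : ZMod p => (cX a - cY a) • zz p ^ a.val) (Finset.mem_univ (0 : ZMod p))
    rw [h0, show (0 : ℚ) • zz p ^ (0 : ZMod p).val = 0 from zero_smul ℚ _, zero_add] at this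
    rw [this, hsum]
  have hcoef := (Fintype.linearIndependent_iff.1 (lin_ind p)) _ hsub
  have key : ∀ a : ZMod p, a ≠ 0 → (Multiplicative.ofAdd a ∈ X ↔ Multiplicative.ofAdd a ∈ Y) := by
    intro a ha
    have := hcoef ⟨a, ha⟩
    simp only [hcX, hcY, sub_eq_zero] at this
    by_cases h1 : Multiplicative.ofAdd a ∈ X <;> by_cases h2 : Multiplicative.ofAdd a ∈ Y <;>
      simp [h1, h2] at this ⊢
  ext x
  by_cases hx0 : x.toAdd = 0
  · have : x = 1 := by
      have : x = Multiplicative.ofAdd x.toAdd := rfl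
      rw [this, hx0]; rfl
    rw [this]
    exact iff_of_false hX hY
  · have hx : x = Multiplicative.ofAdd x.toAdd := rfl
    rw [hx]
    exact key _ hx0


lemma sum_ee_eq_zero : ∑ x : Multiplicative (ZMod p), ee p x = 0 := by
  have hgeo : ∑ i ∈ Finset.range p, zz p ^ i = 0 :=
    (zz_primN p).geom_sum_eq_zero (Fact.out : p.Prime).one_lt
  rw [← Fintype.sum_equiv Multiplicative.ofAdd
    (fun a : ZMod p => ee p (Multiplicative.ofAdd a)) (fun x => ee p x) (fun a => rfl)]
  rw [← hgeo]
  refine Finset.sum_nbij' (fun a : ZMod p => a.val) (fun i : ℕ => (i : ZMod p)) ?_ ?_ ?_ ?_ ?_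
  · intro a _
    exact Finset.mem_range.2 (ZMod.val_lt a)
  · intro i _
    exact Finset.mem_univ _
  · intro a _
    exact ZMod.natCast_rightInverse a
  · intro i hi
    exact ZMod.val_cast_of_lt (Finset.mem_range.1 hi)
  · intro a _
    rw [ee_ofAdd]


-- instances
instance : FiniteDimensional ℚ (KK p) :=
  IsCyclotomicExtension.finiteDimensional {((pq p : ℕ+) : ℕ)} ℚ (KK p)

instance : IsGalois ℚ (KK p) := IsCyclotomicExtension.isGalois {((pq p : ℕ+) : ℕ)} ℚ (KK p)

/-- The automorphism of `Multiplicative (ZMod p)` given by a unit. -/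
def phiU (u : (ZMod p)ˣ) : MulAut (Multiplicative (ZMod p)) where
  toFun x := Multiplicative.ofAdd ((u : ZMod p) * x.toAdd)
  invFun x := Multiplicative.ofAdd (((u⁻¹ : (ZMod p)ˣ) : ZMod p) * x.toAdd)
  left_inv x := by
    show Multiplicative.ofAdd (((u⁻¹ : (ZMod p)ˣ) : ZMod p)
      * (Multiplicative.ofAdd ((u : ZMod p) * x.toAdd)).toAdd) = x
    rw [toAdd_ofAdd, ← mul_assoc, ← Units.val_mul, inv_mul_cancel, Units.val_one, one_mul,
      ofAdd_toAdd]
  right_inv x := by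
    show Multiplicative.ofAdd ((u : ZMod p)
      * (Multiplicative.ofAdd (((u⁻¹ : (ZMod p)ˣ) : ZMod p) * x.toAdd)).toAdd) = x
    rw [toAdd_ofAdd, ← mul_assoc, ← Units.val_mul, mul_inv_cancel, Units.val_one, one_mul,
      ofAdd_toAdd]
  map_mul' x y := by
    show Multiplicative.ofAdd ((u : ZMod p) * (x.toAdd + y.toAdd)) = _
    rw [mul_add, ofAdd_add]

lemma phiU_apply (u : (ZMod p)ˣ) (x : Multiplicative (ZMod p)) :
    phiU p u x = Multiplicative.ofAdd ((u : ZMod p) * x.toAdd) := rfl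

def PhiHom : (ZMod p)ˣ →* MulAut (Multiplicative (ZMod p)) where
  toFun := phiU p
  map_one' := by
    ext x
    show Multiplicative.ofAdd (((1 : (ZMod p)ˣ) : ZMod p) * x.toAdd) = x
    simp
  map_mul' u v := by
    ext x
    show Multiplicative.ofAdd (((u * v : (ZMod p)ˣ) : ZMod p) * x.toAdd)
      = (phiU p u) ((phiU p v) x)
    simp [phiU_apply, mul_assoc]

variable (A : SchurRing (Multiplicative (ZMod p)))

lemma one_not_mem_basic {X : Set (Multiplicative (ZMod p))} (hX : X ∈ A.basicSets)
    (hne : X ≠ {1}) : (1 : Multiplicative (ZMod p)) ∉ X := by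
  intro h1
  have h2 := A.disjoint' X hX {1} A.one_mem hne
  have h3 : (1 : Multiplicative (ZMod p)) ∈ X ∩ ({1} : Set (Multiplicative (ZMod p))) :=
    ⟨h1, rfl⟩
  rw [h2] at h3
  exact h3

lemma basic_unique {X Y : Set (Multiplicative (ZMod p))} (hX : X ∈ A.basicSets)
    (hY : Y ∈ A.basicSets) {x : Multiplicative (ZMod p)} (hx : x ∈ X) (hy : x ∈ Y) : X = Y := by
  by_contra hne
  have h2 := A.disjoint' X hX Y hY hne
  have h3 : x ∈ X ∩ Y := ⟨hx, hy⟩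
  rw [h2] at h3
  exact h3

/-- The finite set of basic sets other than `{1}`. -/
noncomputable def bfin : Finset (Set (Multiplicative (ZMod p))) :=
  (Set.toFinite (A.basicSets \ {({1} : Set (Multiplicative (ZMod p)))})).toFinset

lemma mem_bfin {X : Set (Multiplicative (ZMod p))} :
    X ∈ bfin p A ↔ X ∈ A.basicSets ∧ X ≠ {1} := by
  rw [bfin, Set.Finite.mem_toFinset, Set.mem_diff, Set.mem_singleton_iff]

lemma sum_indicator_bfin {M : Type*} [AddCommMonoid M] (f : Multiplicative (ZMod p) → M)
    (x : Multiplicative (ZMod p)) :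
    ∑ X ∈ bfin p A, (if x ∈ X then f x else 0) = if x = 1 then 0 else f x := by
  by_cases hx : x = 1
  · subst hx
    rw [if_pos rfl]
    refine Finset.sum_eq_zero fun X hX => ?_
    rw [if_neg (one_not_mem_basic p A ((mem_bfin p A).1 hX).1 ((mem_bfin p A).1 hX).2)]
  · rw [if_neg hx]
    obtain ⟨X₀, hX₀, hxX₀⟩ := A.cover x
    have hX₀ne : X₀ ≠ {1} := by
      rintro rfl
      exact hx hxX₀
    have hmem : X₀ ∈ bfin p A := (mem_bfin p A).2 ⟨hX₀, hX₀ne⟩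
    rw [Finset.sum_eq_single_of_mem X₀ hmem, if_pos hxX₀]
    intro Y hY hYne
    rw [if_neg]
    intro hxY
    exact hYne (basic_unique p A ((mem_bfin p A).1 hY).1 hX₀ hxY hxX₀)

lemma sum_eta_bfin : ∑ X ∈ bfin p A, eta p X = -1 := by
  have h1 : ∀ X ∈ bfin p A, eta p X
      = ∑ x : Multiplicative (ZMod p), (if x ∈ X then ee p x else 0) := by
    intro X _
    rw [eta]
    exact Finset.sum_congr rfl fun x _ => by rw [Set.indicator_apply]
  rw [Finset.sum_congr rfl h1, Finset.sum_comm]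
  have h2 : ∀ x : Multiplicative (ZMod p),
      ∑ X ∈ bfin p A, (if x ∈ X then ee p x else 0)
        = if x = 1 then 0 else ee p x := fun x => sum_indicator_bfin p A (ee p) x
  rw [Finset.sum_congr rfl fun x _ => h2 x]
  have h3 : ∀ x : Multiplicative (ZMod p),
      (if x = 1 then 0 else ee p x) = ee p x - (if x = 1 then ee p x else 0) := by
    intro x
    by_cases hx : x = 1 <;> simp [hx]
  rw [Finset.sum_congr rfl fun x _ => h3 x, Finset.sum_sub_distrib, sum_ee_eq_zero,
    Finset.sum_ite_eq' Finset.univ (1 : Multiplicative (ZMod p)) (ee p)]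
  simp

lemma card_GG : Fintype.card (Multiplicative (ZMod p)) = p := by
  rw [Fintype.card_multiplicative, ZMod.card]

lemma sum_card_bfin : ∑ X ∈ bfin p A, X.ncard = p - 1 := by
  have h1 : ∀ X ∈ bfin p A, X.ncard
      = ∑ x : Multiplicative (ZMod p), (if x ∈ X then 1 else 0) := by
    intro X _
    rw [← Finset.card_filter]
    rw [Set.ncard_eq_toFinset_card']
    congr 1
    ext x
    simp
  rw [Finset.sum_congr rfl h1, Finset.sum_comm]
  have h2 : ∀ x : Multiplicative (ZMod p),
      ∑ X ∈ bfin p A, (if x ∈ X then 1 else 0) = if x = 1 then 0 else 1 :=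
    fun x => sum_indicator_bfin p A (fun _ => 1) x
  rw [Finset.sum_congr rfl fun x _ => h2 x]
  have h3 : ∑ x : Multiplicative (ZMod p), (if x = 1 then 0 else 1)
      = (Finset.univ.filter (fun x : Multiplicative (ZMod p) => ¬ (x = 1))).card := by
    rw [Finset.card_filter]
    exact Finset.sum_congr rfl fun x _ => by by_cases hx : x = 1 <;> simp [hx]
  rw [h3]
  have h4 : (Finset.univ.filter (fun x : Multiplicative (ZMod p) => ¬ (x = 1)))
      = Finset.univ.erase 1 := by
    ext x
    simp [Finset.mem_erase, and_comm]
  rw [h4, Finset.card_erase_of_mem (Finset.mem_univ _), Finset.card_univ, card_GG]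

/-- The ℚ-span of the images of the basic sets. -/
noncomputable def SS : Submodule ℚ (KK p) := Submodule.span ℚ (eta p '' A.basicSets)

lemma eta_mem_SS {X : Set (Multiplicative (ZMod p))} (hX : X ∈ A.basicSets) :
    eta p X ∈ SS p A := Submodule.subset_span ⟨X, hX, rfl⟩

lemma one_mem_SS : (1 : KK p) ∈ SS p A := by
  have := eta_mem_SS p A A.one_mem
  rwa [eta_singleton_one] at this

lemma mul_gen_mem_SS {X Y : Set (Multiplicative (ZMod p))} (hX : X ∈ A.basicSets)
    (hY : Y ∈ A.basicSets) : eta p X * eta p Y ∈ SS p A := by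
  have h := A.mul_mem X hX Y hY
  have h2 : pihom p (grpSum X * grpSum Y) ∈
      Submodule.map (pihom p).toLinearMap (Submodule.span ℤ (grpSum '' A.basicSets)) :=
    Submodule.mem_map_of_mem h
  rw [Submodule.map_span] at h2
  have himg : (pihom p).toLinearMap '' (grpSum '' A.basicSets) = eta p '' A.basicSets := by
    rw [Set.image_image]
    exact Set.image_congr fun X _ => pihom_grpSum p X
  rw [himg] at h2
  have hle : Submodule.span ℤ (eta p '' A.basicSets) ≤ (SS p A).restrictScalars ℤ :=
    Submodule.span_le.2 fun z hz => Submodule.subset_span hz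
  have h3 := hle h2
  rwa [map_mul, pihom_grpSum, pihom_grpSum] at h3

lemma mul_mem_SS {x y : KK p} (hx : x ∈ SS p A) (hy : y ∈ SS p A) : x * y ∈ SS p A := by
  have hle : SS p A * SS p A ≤ SS p A := by
    rw [SS, Submodule.span_mul_span]
    refine Submodule.span_le.2 ?_
    rintro _ ⟨a, ⟨X, hX, rfl⟩, b, ⟨Y, hY, rfl⟩, rfl⟩
    exact mul_gen_mem_SS p A hX hY
  exact hle (Submodule.mul_mem_mul hx hy)

noncomputable def Asub : Subalgebra ℚ (KK p) :=
  (SS p A).toSubalgebra (one_mem_SS p A) (fun _ _ hx hy => mul_mem_SS p A hx hy)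

noncomputable def FF : IntermediateField ℚ (KK p) :=
  (Asub p A).toIntermediateField' (Subalgebra.isField_of_algebraic (Asub p A))

lemma FF_toSubalgebra : (FF p A).toSubalgebra = Asub p A :=
  toSubalgebra_toIntermediateField' _ _

lemma finrank_FF_eq : Module.finrank ℚ (FF p A) = Module.finrank ℚ (SS p A) := by
  rw [← IntermediateField.finrank_eq_finrank_subalgebra, FF_toSubalgebra]
  rw [← Subalgebra.finrank_toSubmodule]
  rfl

lemma eta_mem_FF {X : Set (Multiplicative (ZMod p))} (hX : X ∈ A.basicSets) :
    eta p X ∈ FF p A := by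
  have : eta p X ∈ Asub p A := eta_mem_SS p A hX
  rw [← FF_toSubalgebra] at this
  exact this

lemma rank_SS_le : Module.finrank ℚ (SS p A) ≤ (bfin p A).card := by
  classical
  have hBs : A.basicSets = insert ({1} : Set (Multiplicative (ZMod p)))
      (A.basicSets \ {({1} : Set (Multiplicative (ZMod p)))}) := by
    rw [Set.insert_diff_singleton, Set.insert_eq_self.2 A.one_mem]
  have himg : eta p '' A.basicSets
      = insert (1 : KK p) (↑((bfin p A).image (eta p)) : Set (KK p)) := by
    rw [hBs, Set.image_insert_eq, eta_singleton_one]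
    congr 1
    rw [Finset.coe_image, bfin, Set.Finite.coe_toFinset]
  have hone : (1 : KK p) ∈ Submodule.span ℚ (↑((bfin p A).image (eta p)) : Set (KK p)) := by
    have hsum := sum_eta_bfin p A
    have hmem : ∑ X ∈ bfin p A, eta p X
        ∈ Submodule.span ℚ (↑((bfin p A).image (eta p)) : Set (KK p)) :=
      Submodule.sum_mem _ fun X hX => Submodule.subset_span (by
        rw [Finset.coe_image]
        exact Set.mem_image_of_mem _ hX)
    rw [hsum] at hmem
    have h2 := Submodule.neg_mem _ hmem
    simpa using h2
  rw [SS, himg, Submodule.span_insert_eq_span hone]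
  refine le_trans ?_ (Finset.card_image_le (s := bfin p A) (f := eta p))
  exact finrank_span_finset_le_card _

/-- units stabilizing all basic sets -/
noncomputable def Hu : Subgroup (ZMod p)ˣ where
  carrier := {u | ∀ X ∈ A.basicSets, (phiU p u) '' X = X}
  one_mem' := by
    intro X _
    have h : ∀ x, phiU p 1 x = x := fun x => by
      rw [phiU_apply]
      simp
    rw [Set.image_congr fun x _ => h x, Set.image_id']
  mul_mem' := by
    intro u v hu hv X hX
    have hcomp : ∀ x, phiU p (u * v) x = phiU p u (phiU p v x) := by
      intro x
      rw [phiU_apply, phiU_apply, phiU_apply, toAdd_ofAdd]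
      exact congrArg Multiplicative.ofAdd (by rw [Units.val_mul, mul_assoc])
    calc (phiU p (u * v)) '' X
        = (fun x => phiU p u (phiU p v x)) '' X := Set.image_congr fun x _ => hcomp x
      _ = (phiU p u) '' ((phiU p v) '' X) := by
          rw [← Set.image_comp]
          rfl
      _ = X := by rw [hv X hX, hu X hX]
  inv_mem' := by
    intro u hu X hX
    have h1 := hu X hX
    have hinv : ∀ x, (phiU p u⁻¹) ((phiU p u) x) = x := fun x => by
      rw [phiU_apply, phiU_apply, toAdd_ofAdd, ← mul_assoc, ← Units.val_mul, inv_mul_cancel,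
        Units.val_one, one_mul, ofAdd_toAdd]
    calc (phiU p u⁻¹) '' X = (phiU p u⁻¹) '' ((phiU p u) '' X) := by rw [h1]
      _ = (fun x => (phiU p u⁻¹) ((phiU p u) x)) '' X := by
          rw [← Set.image_comp]
          rfl
      _ = X := by rw [Set.image_congr fun x _ => hinv x, Set.image_id']


lemma mem_Hu {u : (ZMod p)ˣ} :
    u ∈ Hu p A ↔ ∀ X ∈ A.basicSets, (phiU p u) '' X = X := Iff.rfl

noncomputable def ua (σ : KK p ≃ₐ[ℚ] KK p) : (ZMod p)ˣ := (zz_prim p).autToPow ℚ σ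

lemma sigma_ee (σ : KK p ≃ₐ[ℚ] KK p) (x : Multiplicative (ZMod p)) :
    σ (ee p x) = ee p (phiU p (ua p σ) x) := by
  have hspec : zz p ^ ((ua p σ : ZMod p)).val = σ (zz p) := (zz_prim p).autToPow_spec ℚ σ
  show σ (zz p ^ (x.toAdd).val) = zz p ^ ((phiU p (ua p σ) x).toAdd).val
  rw [map_pow, ← hspec, ← pow_mul, phiU_apply, toAdd_ofAdd, ZMod.val_mul, zz_pow_mod]

lemma sigma_eta (σ : KK p ≃ₐ[ℚ] KK p) (X : Set (Multiplicative (ZMod p))) :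
    σ (eta p X) = eta p ((phiU p (ua p σ)) '' X) := by
  rw [eta, map_sum, eta]
  rw [← Equiv.sum_comp (phiU p (ua p σ)).toEquiv
    (fun y => ((phiU p (ua p σ)) '' X).indicator (fun g => ee p g) y)]
  refine Finset.sum_congr rfl fun x _ => ?_
  have happ : (phiU p (ua p σ)).toEquiv x = phiU p (ua p σ) x := rfl
  by_cases hx : x ∈ X
  · rw [Set.indicator_of_mem hx, happ, Set.indicator_of_mem (Set.mem_image_of_mem _ hx),
      sigma_ee]
  · rw [Set.indicator_of_notMem hx, map_zero, happ, Set.indicator_of_notMem]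
    rintro ⟨y, hy, hxy⟩
    exact hx ((MulEquiv.injective _ hxy) ▸ hy)

lemma ua_mem_Hu {σ : KK p ≃ₐ[ℚ] KK p} (hσ : σ ∈ (FF p A).fixingSubgroup) :
    ua p σ ∈ Hu p A := by
  intro X hX
  by_cases hone : X = {1}
  · subst hone
    rw [Set.image_singleton, map_one]
  · have h1 : σ (eta p X) = eta p X :=
      (IntermediateField.mem_fixingSubgroup_iff (FF p A) σ).1 hσ _ (eta_mem_FF p A hX)
    rw [sigma_eta] at h1
    have hnot : (1 : Multiplicative (ZMod p)) ∉ X := one_not_mem_basic p A hX hone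
    have hnot2 : (1 : Multiplicative (ZMod p)) ∉ (phiU p (ua p σ)) '' X := by
      rintro ⟨y, hy, hxy⟩
      have hy1 : y = 1 := by
        apply (phiU p (ua p σ)).injective
        rw [hxy, map_one]
      exact hnot (hy1 ▸ hy)
    exact eta_inj p hnot2 hnot h1

lemma card_fixing_le : Nat.card (FF p A).fixingSubgroup ≤ Nat.card (Hu p A) := by
  have hinj : Function.Injective
      (fun σ : (FF p A).fixingSubgroup => (⟨ua p σ.1, ua_mem_Hu p A σ.2⟩ : Hu p A)) := by
    intro σ τ h
    have h2 : ua p σ.1 = ua p τ.1 := congrArg Subtype.val h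
    exact Subtype.ext ((zz_prim p).autToPow_injective ℚ h2)
  exact Nat.card_le_card_of_injective _ hinj

lemma card_fixing_mul :
    Module.finrank ℚ (FF p A) * Nat.card (FF p A).fixingSubgroup = p - 1 := by
  classical
  have h1 : Fintype.card (FF p A).fixingSubgroup = Module.finrank (FF p A) (KK p) :=
    Nat.card_eq_fintype_card.symm.trans (IsGalois.card_fixingSubgroup_eq_finrank (FF p A))
  rw [Nat.card_eq_fintype_card, h1, Module.finrank_mul_finrank, finrank_KK]

lemma card_Hu_le_ncard {X : Set (Multiplicative (ZMod p))} (hX : X ∈ A.basicSets)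
    (hne : X ≠ {1}) {x : Multiplicative (ZMod p)} (hx : x ∈ X) :
    Nat.card (Hu p A) ≤ X.ncard := by
  have hx1 : x ≠ 1 := fun h => one_not_mem_basic p A hX hne (h ▸ hx)
  have hx0 : x.toAdd ≠ 0 := by
    intro h0
    apply hx1
    have hxx : x = Multiplicative.ofAdd x.toAdd := rfl
    rw [hxx, h0]
    rfl
  have hmem : ∀ u : Hu p A, phiU p u x ∈ X := fun u => by
    have h2 := u.2 X hX
    rw [← h2]
    exact Set.mem_image_of_mem _ hx
  have hinj : Function.Injective (fun u : Hu p A => (⟨phiU p u x, hmem u⟩ : X)) := by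
    intro u v h
    have h2 : phiU p u.1 x = phiU p v.1 x := congrArg Subtype.val h
    rw [phiU_apply, phiU_apply] at h2
    have h3 : (u.1 : ZMod p) * x.toAdd = (v.1 : ZMod p) * x.toAdd := by
      have h4 := congrArg Multiplicative.toAdd h2
      simpa using h4
    exact Subtype.ext (Units.ext (mul_right_cancel₀ hx0 h3))
  have h5 := Nat.card_le_card_of_injective _ hinj
  rwa [Nat.card_coe_set_eq] at h5

lemma ncard_eq_card_Hu {X : Set (Multiplicative (ZMod p))} (hX : X ∈ bfin p A) :
    X.ncard = Nat.card (Hu p A) := by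
  have hge : ∀ Y ∈ bfin p A, Nat.card (Hu p A) ≤ Y.ncard := by
    intro Y hY
    obtain ⟨hYB, hYne⟩ := (mem_bfin p A).1 hY
    obtain ⟨y, hy⟩ := A.nonempty_mem Y hYB
    exact card_Hu_le_ncard p A hYB hYne hy
  have hchain : (p - 1 : ℕ) ≤ (bfin p A).card * Nat.card (Hu p A) := by
    have h1 : Module.finrank ℚ (FF p A) ≤ (bfin p A).card := by
      rw [finrank_FF_eq]
      exact rank_SS_le p A
    calc p - 1 = Module.finrank ℚ (FF p A) * Nat.card (FF p A).fixingSubgroup :=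
          (card_fixing_mul p A).symm
      _ ≤ (bfin p A).card * Nat.card (Hu p A) := Nat.mul_le_mul h1 (card_fixing_le p A)
  have hsum2 : ∑ Y ∈ bfin p A, Y.ncard ≤ ∑ Y ∈ bfin p A, Nat.card (Hu p A) := by
    rw [Finset.sum_const, smul_eq_mul, sum_card_bfin p A]
    exact hchain
  have hsum3 : ∑ Y ∈ bfin p A, Nat.card (Hu p A) ≤ ∑ Y ∈ bfin p A, Y.ncard :=
    Finset.sum_le_sum hge
  have heq : ∀ Y ∈ bfin p A, Nat.card (Hu p A) = Y.ncard :=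
    (Finset.sum_eq_sum_iff_of_le hge).1 (le_antisymm hsum3 hsum2)
  exact (heq X hX).symm

noncomputable def MM : Subgroup (MulAut (Multiplicative (ZMod p))) :=
  (Hu p A).map (PhiHom p)

lemma orbit_MM (x : Multiplicative (ZMod p)) :
    MulAction.orbit (MM p A) x = Set.range (fun u : Hu p A => phiU p u x) := by
  ext y
  rw [MulAction.mem_orbit_iff]
  constructor
  · rintro ⟨⟨m, hm⟩, rfl⟩
    obtain ⟨u, hu, rfl⟩ := hm
    exact ⟨⟨u, hu⟩, rfl⟩
  · rintro ⟨⟨u, hu⟩, rfl⟩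
    exact ⟨⟨PhiHom p u, Subgroup.mem_map_of_mem _ hu⟩, rfl⟩

lemma orbit_MM_one : MulAction.orbit (MM p A) (1 : Multiplicative (ZMod p)) = {1} := by
  rw [orbit_MM]
  have h : (fun u : Hu p A => phiU p u (1 : Multiplicative (ZMod p)))
      = (fun _ : Hu p A => (1 : Multiplicative (ZMod p))) := by
    funext u
    exact map_one (phiU p u.1)
  rw [h, Set.range_const]

lemma basic_eq_orbit {X : Set (Multiplicative (ZMod p))} (hX : X ∈ bfin p A)
    {x : Multiplicative (ZMod p)} (hx : x ∈ X) : X = MulAction.orbit (MM p A) x := by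
  obtain ⟨hXB, hXne⟩ := (mem_bfin p A).1 hX
  have hx1 : x ≠ 1 := fun h => one_not_mem_basic p A hXB hXne (h ▸ hx)
  have hx0 : x.toAdd ≠ 0 := by
    intro h0
    apply hx1
    have hxx : x = Multiplicative.ofAdd x.toAdd := rfl
    rw [hxx, h0]
    rfl
  have hsub : MulAction.orbit (MM p A) x ⊆ X := by
    rw [orbit_MM]
    rintro _ ⟨u, rfl⟩
    have h2 := u.2 X hXB
    rw [← h2]
    exact Set.mem_image_of_mem _ hx
  have horb_ge : Nat.card (Hu p A) ≤ (MulAction.orbit (MM p A) x).ncard := by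
    have hmem : ∀ u : Hu p A, phiU p u x ∈ MulAction.orbit (MM p A) x := fun u => by
      rw [orbit_MM]
      exact ⟨u, rfl⟩
    have hinj : Function.Injective
        (fun u : Hu p A => (⟨phiU p u x, hmem u⟩ : MulAction.orbit (MM p A) x)) := by
      intro u v h
      have h2 : phiU p u.1 x = phiU p v.1 x := congrArg Subtype.val h
      rw [phiU_apply, phiU_apply] at h2
      have h3 : (u.1 : ZMod p) * x.toAdd = (v.1 : ZMod p) * x.toAdd := by
        have h4 := congrArg Multiplicative.toAdd h2
        simpa using h4
      exact Subtype.ext (Units.ext (mul_right_cancel₀ hx0 h3))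
    have h5 := Nat.card_le_card_of_injective _ hinj
    rwa [Nat.card_coe_set_eq] at h5
  have hcard : X.ncard ≤ (MulAction.orbit (MM p A) x).ncard := by
    rw [ncard_eq_card_Hu p A hX]
    exact horb_ge
  exact (Set.eq_of_subset_of_ncard_le hsub hcard (Set.toFinite X)).symm


end SRingCp

theorem sring_over_Cp_cyclotomic (p : ℕ) [Fact p.Prime]
    (A : SchurRing (Multiplicative (ZMod p))) : A.IsCyclotomic := by
  classical
  refine ⟨SRingCp.MM p A, ?_⟩
  ext X
  rw [Set.mem_range]
  constructor
  · intro hX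
    by_cases hone : X = {1}
    · subst hone
      exact ⟨1, SRingCp.orbit_MM_one p A⟩
    · have hXf : X ∈ SRingCp.bfin p A := (SRingCp.mem_bfin p A).2 ⟨hX, hone⟩
      obtain ⟨x, hx⟩ := A.nonempty_mem X hX
      exact ⟨x, (SRingCp.basic_eq_orbit p A hXf hx).symm⟩
  · rintro ⟨x, rfl⟩
    obtain ⟨X, hX, hx⟩ := A.cover x
    by_cases hx1 : x = 1
    · subst hx1
      rw [SRingCp.orbit_MM_one p A]
      exact A.one_mem
    · have hXne : X ≠ {1} := by
        rintro rfl
        exact hx1 hx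
      have hXf := (SRingCp.mem_bfin p A).2 ⟨hX, hXne⟩
      rw [← SRingCp.basic_eq_orbit p A hXf hx]
      exact hX
end

section
/- Let A and P be finite groups, U_0 ⫳ U ≤ Aut(A) a normal subgroup, V_0 ⫳ V ≤ Aut(P) a normal subgroup, X_A an orbit of U on A and X_P an orbit of V on P. Let Π_A be the set of orbits of U_0 contained in X_A and Π_P the set of orbits of V_0 contained in X_P, and let U^{Π_A} and V^{Π_P} be the permutation groups induced by U on Π_A and by V on Π_P. Suppose f : Π_A → Π_P is a bijection whose induced map on permutations carries U^{Π_A} onto V^{Π_P}, and let K be the subdirect product of U and V with respect to the natural epimorphisms φ : U → U^{Π_A}, ψ : V → V^{Π_P} and this isomorphism. Then K ≤ Aut(A) × Aut(P) ≤ Aut(A × P), and the set ⋃_{Y ∈ Π_A} Y × Y^f is an orbit of K on G = A × P. -/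
lemma conj_mem_aux {G : Type*} [Group G] {U U₀ : Subgroup G}
    (h₀ : U₀ ≤ U) (hn : (U₀.subgroupOf U).Normal) {u u₀ : G} (hu : u ∈ U) (hu₀ : u₀ ∈ U₀) :
    u * u₀ * u⁻¹ ∈ U₀ := by
  have h := hn.conj_mem ⟨u₀, h₀ hu₀⟩ (by simpa [Subgroup.mem_subgroupOf] using hu₀) ⟨u, hu⟩
  simpa [Subgroup.mem_subgroupOf] using h

lemma image_orbit_aux {A : Type*} [Group A] {U U₀ : Subgroup (MulAut A)}
    (h₀ : U₀ ≤ U) (hn : (U₀.subgroupOf U).Normal) {u : MulAut A} (hu : u ∈ U) (a : A) :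
    ⇑u '' MulAction.orbit U₀ a = MulAction.orbit U₀ (u a) := by
  ext x
  simp only [Set.mem_image, MulAction.mem_orbit_iff, Subgroup.smul_def, MulAut.smul_def]
  constructor
  · rintro ⟨y, ⟨⟨g, hg⟩, rfl⟩, rfl⟩
    exact ⟨⟨u * g * u⁻¹, conj_mem_aux h₀ hn hu hg⟩, by simp⟩
  · rintro ⟨⟨g, hg⟩, rfl⟩
    exact ⟨(u⁻¹ * g * u) a, ⟨⟨u⁻¹ * g * u, by simpa using conj_mem_aux h₀ hn (inv_mem hu) hg⟩, rfl⟩, by simp⟩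

lemma smul_mem_orbit_aux {A : Type*} [Group A] {U : Subgroup (MulAut A)} {u : MulAut A}
    (hu : u ∈ U) {a b : A} (h : a ∈ MulAction.orbit U b) : u a ∈ MulAction.orbit U b := by
  obtain ⟨⟨g, hg⟩, rfl⟩ := h
  exact ⟨⟨u * g, mul_mem hu hg⟩, by simp [Subgroup.smul_def, MulAut.smul_def]⟩

lemma image_orbit_self_aux {P : Type*} [Group P] {V₀ : Subgroup (MulAut P)} {v : MulAut P}
    (hv : v ∈ V₀) (x : P) : ⇑v '' MulAction.orbit V₀ x = MulAction.orbit V₀ x := by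
  have hn : (V₀.subgroupOf V₀).Normal := by rw [Subgroup.subgroupOf_self]; infer_instance
  rw [image_orbit_aux le_rfl hn hv x]
  exact MulAction.orbit_eq_iff.mpr ⟨⟨v, hv⟩, rfl⟩

lemma orbit_trans_aux {A : Type*} [Group A] {U : Subgroup (MulAut A)} {a a' a₀ : A}
    (h : a ∈ MulAction.orbit U a₀) (h' : a' ∈ MulAction.orbit U a₀) :
    ∃ u ∈ U, u a = a' := by
  have : a' ∈ MulAction.orbit U a := by rw [MulAction.orbit_eq_iff.mpr h]; exact h'
  obtain ⟨⟨g, hg⟩, rfl⟩ := this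
  exact ⟨g, hg, rfl⟩

theorem subdirect_product_orbit (A P : Type*) [Group A] [Fintype A] [Group P] [Fintype P]
    (U U₀ : Subgroup (MulAut A)) (V V₀ : Subgroup (MulAut P))
    (hU₀ : U₀ ≤ U) (hUnormal : (U₀.subgroupOf U).Normal)
    (hV₀ : V₀ ≤ V) (hVnormal : (V₀.subgroupOf V).Normal)
    (a₀ : A) (p₀ : P)
    (XA : Set A) (hXA : XA = MulAction.orbit U a₀)
    (XP : Set P) (hXP : XP = MulAction.orbit V p₀)
    (f : Set A → Set P)
    -- f is a bijection from Π_A onto Π_P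
    (hf : Set.BijOn f {Y | ∃ a ∈ XA, Y = MulAction.orbit U₀ a}
                      {S | ∃ x ∈ XP, S = MulAction.orbit V₀ x})
    -- the induced map on permutations carries U^{Π_A} onto V^{Π_P}
    (hcarry₁ : ∀ u ∈ U, ∃ v ∈ V, ∀ Y ∈ {Y : Set A | ∃ a ∈ XA, Y = MulAction.orbit U₀ a},
      f (⇑u '' Y) = ⇑v '' f Y)
    (hcarry₂ : ∀ v ∈ V, ∃ u ∈ U, ∀ Y ∈ {Y : Set A | ∃ a ∈ XA, Y = MulAction.orbit U₀ a},
      f (⇑u '' Y) = ⇑v '' f Y) :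
    -- the subdirect product K is a subgroup of Aut(A) × Aut(P)
    (∃ Ksub : Subgroup (MulAut A × MulAut P),
      (Ksub : Set (MulAut A × MulAut P)) =
        {w : MulAut A × MulAut P | w.1 ∈ U ∧ w.2 ∈ V ∧
          ∀ Y ∈ {Y : Set A | ∃ a ∈ XA, Y = MulAction.orbit U₀ a},
            f (⇑w.1 '' Y) = ⇑w.2 '' f Y}) ∧
    -- and ⋃_{Y ∈ Π_A} Y × Y^f is an orbit of K on A × P
    (∀ g ∈ ⋃ Y ∈ {Y : Set A | ∃ a ∈ XA, Y = MulAction.orbit U₀ a}, Y ×ˢ f Y,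
      (⋃ Y ∈ {Y : Set A | ∃ a ∈ XA, Y = MulAction.orbit U₀ a}, Y ×ˢ f Y) =
        {h : A × P | ∃ w : MulAut A × MulAut P,
          (w.1 ∈ U ∧ w.2 ∈ V ∧
            ∀ Y ∈ {Y : Set A | ∃ a ∈ XA, Y = MulAction.orbit U₀ a},
              f (⇑w.1 '' Y) = ⇑w.2 '' f Y) ∧
          h = (⇑w.1 g.1, ⇑w.2 g.2)}) := by
  set PiA : Set (Set A) := {Y | ∃ a ∈ XA, Y = MulAction.orbit U₀ a} with hPiA
  have hclosed : ∀ {u : MulAut A}, u ∈ U → ∀ Y ∈ PiA, ⇑u '' Y ∈ PiA := by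
    rintro u hu Y ⟨a, ha, rfl⟩
    refine ⟨u a, ?_, image_orbit_aux hU₀ hUnormal hu a⟩
    rw [hXA] at ha ⊢; exact smul_mem_orbit_aux hu ha
  -- elements of Y ∈ PiA lie in XA, and Y = orbit of any of its elements
  have hYsub : ∀ Y ∈ PiA, ∀ x ∈ Y, x ∈ XA ∧ Y = MulAction.orbit U₀ x := by
    rintro Y ⟨a, ha, rfl⟩ x hx
    constructor
    · rw [hXA] at ha ⊢
      obtain ⟨⟨g, hg⟩, rfl⟩ := hx
      have : (g : MulAut A) a ∈ MulAction.orbit U a₀ := smul_mem_orbit_aux (hU₀ hg) ha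
      simpa [Subgroup.smul_def, MulAut.smul_def] using this
    · exact (MulAction.orbit_eq_iff.mpr hx).symm
  have hSorb : ∀ S ∈ {S : Set P | ∃ x ∈ XP, S = MulAction.orbit V₀ x}, ∀ y ∈ S,
      S = MulAction.orbit V₀ y := by
    rintro S ⟨x, hx, rfl⟩ y hy
    exact (MulAction.orbit_eq_iff.mpr hy).symm
  set Kset : Set (MulAut A × MulAut P) :=
    {w : MulAut A × MulAut P | w.1 ∈ U ∧ w.2 ∈ V ∧
      ∀ Y ∈ PiA, f (⇑w.1 '' Y) = ⇑w.2 '' f Y} with hKset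
  have hone : (1 : MulAut A × MulAut P) ∈ Kset := ⟨one_mem U, one_mem V, by intro Y hY; simp⟩
  have hmul : ∀ {w₁ w₂ : MulAut A × MulAut P}, w₁ ∈ Kset → w₂ ∈ Kset → w₁ * w₂ ∈ Kset := by
    rintro w₁ w₂ ⟨h1U, h1V, h1f⟩ ⟨h2U, h2V, h2f⟩
    refine ⟨mul_mem h1U h2U, mul_mem h1V h2V, fun Y hY => ?_⟩
    rw [Prod.fst_mul, Prod.snd_mul, MulAut.coe_mul, MulAut.coe_mul, Set.image_comp,
      Set.image_comp, h1f _ (hclosed h2U Y hY), h2f Y hY]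
  have hinv : ∀ {w : MulAut A × MulAut P}, w ∈ Kset → w⁻¹ ∈ Kset := by
    rintro w ⟨hwU, hwV, hwf⟩
    refine ⟨inv_mem hwU, inv_mem hwV, fun Y hY => ?_⟩
    have hY' : ⇑w.1⁻¹ '' Y ∈ PiA := hclosed (inv_mem hwU) Y hY
    have key := hwf _ hY'
    have h1 : ⇑w.1 '' (⇑w.1⁻¹ '' Y) = Y := by
      rw [← Set.image_comp]
      have : ⇑w.1 ∘ ⇑w.1⁻¹ = id := funext fun x => MulAut.apply_inv_self A w.1 x
      rw [this, Set.image_id]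
    rw [h1] at key
    rw [Prod.fst_inv, Prod.snd_inv, key, ← Set.image_comp]
    have : ⇑w.2⁻¹ ∘ ⇑w.2 = id := funext fun x => MulAut.inv_apply_self P w.2 x
    rw [this, Set.image_id]
  constructor
  · exact ⟨{ carrier := Kset, one_mem' := hone, mul_mem' := hmul, inv_mem' := hinv }, rfl⟩
  · intro g hg
    simp only [Set.mem_iUnion, exists_prop] at hg
    obtain ⟨Y, hYPi, hgY⟩ := hg
    obtain ⟨hg1, hg2⟩ := hgY
    ext h
    simp only [Set.mem_iUnion, exists_prop, Set.mem_setOf_eq]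
    constructor
    · rintro ⟨Y', hYpPi, hh1, hh2⟩
      obtain ⟨hg1XA, hYorb⟩ := hYsub Y hYPi g.1 hg1
      obtain ⟨hh1XA, hY'orb⟩ := hYsub Y' hYpPi h.1 hh1
      -- find u ∈ U with u g.1 = h.1
      rw [hXA] at hg1XA hh1XA
      obtain ⟨u, huU, hug⟩ := orbit_trans_aux hg1XA hh1XA
      have himY : ⇑u '' Y = Y' := by
        rw [hYorb, image_orbit_aux hU₀ hUnormal huU, hug, ← hY'orb]
      obtain ⟨v₁, hv₁V, hv₁f⟩ := hcarry₁ u huU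
      -- f Y' = v₁ '' f Y
      have hfY' : f Y' = ⇑v₁ '' f Y := by rw [← himY]; exact hv₁f Y hYPi
      -- both v₁ g.2 and h.2 lie in f Y', a V₀-orbit
      have hfY'P : f Y' ∈ {S : Set P | ∃ x ∈ XP, S = MulAction.orbit V₀ x} := hf.mapsTo hYpPi
      have hv₁g2 : v₁ g.2 ∈ f Y' := by rw [hfY']; exact ⟨g.2, hg2, rfl⟩
      have horb := hSorb _ hfY'P _ hv₁g2
      rw [horb] at hh2
      obtain ⟨⟨v₀, hv₀⟩, hv₀eq⟩ := hh2
      refine ⟨(u, v₀ * v₁), ⟨huU, mul_mem (hV₀ hv₀) hv₁V, fun Z hZ => ?_⟩, ?_⟩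
      · rw [MulAut.coe_mul, Set.image_comp, ← hv₁f Z hZ]
        have hfZ : f (⇑u '' Z) ∈ {S : Set P | ∃ x ∈ XP, S = MulAction.orbit V₀ x} :=
          hf.mapsTo (hclosed huU Z hZ)
        obtain ⟨x, hx, hfx⟩ := hfZ
        rw [hfx, image_orbit_self_aux hv₀]
      · have : v₀ (v₁ g.2) = h.2 := by
          simpa [Subgroup.smul_def, MulAut.smul_def] using hv₀eq
        rw [show ((u, v₀ * v₁) : MulAut A × MulAut P).1 = u from rfl,
          show ((u, v₀ * v₁) : MulAut A × MulAut P).2 = v₀ * v₁ from rfl, hug,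
          MulAut.mul_apply, this]
    · rintro ⟨w, ⟨hwU, hwV, hwf⟩, rfl⟩
      refine ⟨⇑w.1 '' Y, hclosed hwU Y hYPi, ⟨g.1, hg1, rfl⟩, ?_⟩
      rw [hwf Y hYPi]
      exact ⟨g.2, hg2, rfl⟩
end

section
/- Let p > 3 be a prime, G = A × P with A = E_9 and P = C_p, and let 𝒜 be a dense S-ring over G. Let X be a basic set of 𝒜 and V = V(X) ≤ Aut(P) a subgroup whose orbit on P containing X_P equals X_P. Then there exists a subgroup V_0 ≤ V such that Π_P(X) = {X(a) : a ∈ X_A} is exactly the set of orbits of V_0 on X_P; in particular, Π_P(X) is an imprimitivity system for the transitive permutation group induced by V on X_P. -/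
open scoped Pointwise

/-! ### Auxiliary lemmas for the proof -/

namespace SRAux

open MonoidAlgebra
open scoped Classical

variable {G : Type*} [CommGroup G] [Fintype G]

lemma grpSum_apply (X : Set G) (g : G) : (grpSum X).coeff g = if g ∈ X then 1 else 0 := by
  classical
  have h1 : (grpSum X).coeff g
      = ∑ x : G, (if x = g then (if x ∈ X then (1 : ℤ) else 0) else 0) := by
    rw [grpSum, MonoidAlgebra.coeff_sum, Finsupp.finset_sum_apply]
    refine Finset.sum_congr rfl fun x _ => ?_
    rw [Set.indicator_apply]
    split_ifs with h h2 h3 <;>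
      simp_all [MonoidAlgebra.coeff_single_apply]
  rw [h1, Finset.sum_ite_eq' Finset.univ g (fun x => if x ∈ X then (1 : ℤ) else 0)]
  simp

lemma grpSum_eq_sum (X : Set G) :
    grpSum X = ∑ x ∈ X.toFinite.toFinset, MonoidAlgebra.single x (1 : ℤ) := by
  classical
  have h1 : ∑ x ∈ X.toFinite.toFinset,
      X.indicator (fun g => MonoidAlgebra.single g (1 : ℤ)) x
      = ∑ x : G, X.indicator (fun g => MonoidAlgebra.single g (1 : ℤ)) x :=
    Finset.sum_subset (Finset.subset_univ _)
      (fun x _ hx => Set.indicator_of_notMem (by simpa using hx) _)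
  rw [grpSum, ← h1]
  exact Finset.sum_congr rfl fun x hx => Set.indicator_of_mem (by simpa using hx) _

variable {A : SchurRing G}

lemma basic_eq {X Y : Set G} (hX : X ∈ A.basicSets) (hY : Y ∈ A.basicSets) {g : G}
    (hgX : g ∈ X) (hgY : g ∈ Y) : X = Y := by
  by_contra hne
  have h := A.disjoint' X hX Y hY hne
  exact absurd (Set.mem_inter hgX hgY) (by rw [h]; exact Set.notMem_empty g)

lemma mem_span_basic {X : Set G} (hX : X ∈ A.basicSets) :
    grpSum X ∈ Submodule.span ℤ (grpSum '' A.basicSets) :=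
  Submodule.subset_span ⟨X, hX, rfl⟩

lemma mul_mem_span {a b : MonoidAlgebra ℤ G}
    (ha : a ∈ Submodule.span ℤ (grpSum '' A.basicSets))
    (hb : b ∈ Submodule.span ℤ (grpSum '' A.basicSets)) :
    a * b ∈ Submodule.span ℤ (grpSum '' A.basicSets) := by
  induction ha using Submodule.span_induction with
  | mem x hx =>
    induction hb using Submodule.span_induction with
    | mem y hy =>
      obtain ⟨X, hX, rfl⟩ := hx
      obtain ⟨Y, hY, rfl⟩ := hy
      exact A.mul_mem X hX Y hY
    | zero => rw [mul_zero]; exact Submodule.zero_mem _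
    | add y z _ _ hy' hz' => rw [mul_add]; exact add_mem hy' hz'
    | smul c y _ hy' => rw [mul_smul_comm]; exact Submodule.smul_mem _ _ hy'
  | zero => rw [zero_mul]; exact Submodule.zero_mem _
  | add x y _ _ hx' hy' => rw [add_mul]; exact add_mem hx' hy'
  | smul c x _ hx' => rw [smul_mul_assoc]; exact Submodule.smul_mem _ _ hx'

lemma grpSum_one : grpSum ({1} : Set G) = (1 : MonoidAlgebra ℤ G) := by
  classical
  ext g
  rw [grpSum_apply, MonoidAlgebra.one_def, MonoidAlgebra.coeff_single_apply]
  simp [eq_comm]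

lemma pow_mem_span {X : Set G} (hX : X ∈ A.basicSets) (n : ℕ) :
    grpSum X ^ n ∈ Submodule.span ℤ (grpSum '' A.basicSets) := by
  induction n with
  | zero =>
    rw [pow_zero, ← grpSum_one]
    exact mem_span_basic A.one_mem
  | succ n ih => rw [pow_succ]; exact mul_mem_span ih (mem_span_basic hX)

lemma apply_eq_of_mem_span {f : MonoidAlgebra ℤ G}
    (hf : f ∈ Submodule.span ℤ (grpSum '' A.basicSets)) {Y : Set G}
    (hY : Y ∈ A.basicSets) {z z' : G} (hz : z ∈ Y) (hz' : z' ∈ Y) : f.coeff z = f.coeff z' := by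
  induction hf using Submodule.span_induction with
  | mem x hx =>
    obtain ⟨X, hX, rfl⟩ := hx
    rw [grpSum_apply, grpSum_apply]
    by_cases h1 : z ∈ X
    · have hXY : X = Y := basic_eq hX hY h1 hz
      subst hXY
      rw [if_pos h1, if_pos hz']
    · by_cases h2 : z' ∈ X
      · have hXY : X = Y := basic_eq hX hY h2 hz'
        subst hXY
        exact absurd hz h1
      · rw [if_neg h1, if_neg h2]
  | zero => simp
  | add x y _ _ hx' hy' => rw [MonoidAlgebra.coeff_add, Finsupp.add_apply, Finsupp.add_apply, hx', hy']
  | smul c x _ hx' => rw [MonoidAlgebra.coeff_smul_apply, MonoidAlgebra.coeff_smul_apply, hx']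

lemma exists_basic_of_aset {S : Set G} (hS : A.IsASet S) {g : G} (hg : g ∈ S) :
    ∃ Y ∈ A.basicSets, g ∈ Y ∧ Y ⊆ S := by
  obtain ⟨T, hT, rfl⟩ := hS
  obtain ⟨Z, hZT, hgZ⟩ := hg
  exact ⟨Z, hT hZT, hgZ, fun y hy => ⟨Z, hZT, hy⟩⟩

lemma isASet_of_forall {S : Set G}
    (h : ∀ g ∈ S, ∃ Y ∈ A.basicSets, g ∈ Y ∧ Y ⊆ S) : A.IsASet S := by
  refine ⟨{Y | Y ∈ A.basicSets ∧ Y ⊆ S}, fun Y hY => hY.1, ?_⟩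
  ext g
  constructor
  · intro hg
    obtain ⟨Y, hY, hgY, hYS⟩ := h g hg
    exact ⟨Y, ⟨hY, hYS⟩, hgY⟩
  · rintro ⟨Y, ⟨hY, hYS⟩, hgY⟩
    exact hYS hgY

lemma basic_subset_of_aset_mem {S Y : Set G} (hS : A.IsASet S)
    (hY : Y ∈ A.basicSets) {g : G} (hgY : g ∈ Y) (hgS : g ∈ S) : Y ⊆ S := by
  obtain ⟨Z, hZ, hgZ, hZS⟩ := exists_basic_of_aset hS hgS
  have : Z = Y := basic_eq hZ hY hgZ hgY
  subst this
  exact hZS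

lemma isASet_iUnion {ι : Sort*} {f : ι → Set G} (h : ∀ i, A.IsASet (f i)) :
    A.IsASet (⋃ i, f i) := by
  apply isASet_of_forall
  intro g hg
  obtain ⟨i, hi⟩ := Set.mem_iUnion.1 hg
  obtain ⟨Y, hY, hgY, hYS⟩ := exists_basic_of_aset (h i) hi
  exact ⟨Y, hY, hgY, hYS.trans (Set.subset_iUnion f i)⟩

lemma pow_prime_image_aset [Nontrivial G] {q : ℕ} (hq : q.Prime)
    (hq' : Nat.Coprime q (Fintype.card G)) {X : Set G} (hX : X ∈ A.basicSets) :
    A.IsASet ((· ^ q) '' X) := by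
  classical
  haveI : Fact q.Prime := ⟨hq⟩
  have hinj : Function.Injective (fun g : G => g ^ q) := by
    have hb := Nat.Coprime.pow_left_bijective (G := G) (n := q)
      (by rw [Nat.card_eq_fintype_card]; exact hq'.symm)
    exact hb.injective
  -- the coefficient reduction map to `ZMod q`
  let Φ : MonoidAlgebra ℤ G →+* MonoidAlgebra (ZMod q) G :=
    MonoidAlgebra.liftNCRingHom
      ((MonoidAlgebra.singleOneRingHom).comp (Int.castRingHom (ZMod q)))
      (MonoidAlgebra.of (ZMod q) G) (fun x y => Commute.all _ _)
  have hΦsingle : ∀ (x : G) (c : ℤ),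
      Φ (MonoidAlgebra.single x c) = MonoidAlgebra.single x ((c : ZMod q)) := by
    intro x c
    show MonoidAlgebra.liftNC _ _ _ = _
    rw [MonoidAlgebra.liftNC_single]
    show MonoidAlgebra.single (1 : G) ((c : ZMod q)) * MonoidAlgebra.single x (1 : ZMod q) = _
    rw [MonoidAlgebra.single_mul_single, one_mul, mul_one]
  have hΦapply : ∀ (f : MonoidAlgebra ℤ G) (g : G),
      (Φ f).coeff g = ((f.coeff g : ℤ) : ZMod q) := by
    intro f
    induction f using MonoidAlgebra.induction_linear with
    | zero => simp
    | add f₁ f₂ hf₁ hf₂ =>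
      intro g'
      rw [map_add, MonoidAlgebra.coeff_add, Finsupp.add_apply, MonoidAlgebra.coeff_add, Finsupp.add_apply, hf₁, hf₂]
      push_cast
      ring
    | single a b =>
      intro g'
      rw [hΦsingle, MonoidAlgebra.coeff_single_apply, MonoidAlgebra.coeff_single_apply]
      split_ifs <;> simp
  haveI : CharP (MonoidAlgebra (ZMod q) G) q := by
    refine charP_of_injective_ringHom
      (f := (MonoidAlgebra.singleOneRingHom : ZMod q →+* MonoidAlgebra (ZMod q) G)) ?_ q
    intro a b hab
    have : MonoidAlgebra.single (1 : G) a = MonoidAlgebra.single (1 : G) b := hab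
    exact MonoidAlgebra.single_right_injective this
  haveI : ExpChar (MonoidAlgebra (ZMod q) G) q := ExpChar.prime hq
  -- Frobenius computation
  have key : Φ (grpSum X ^ q) = Φ (grpSum ((· ^ q) '' X)) := by
    have himg : ((· ^ q) '' X).toFinite.toFinset
        = X.toFinite.toFinset.image (· ^ q) := by
      ext y
      constructor
      · intro hy
        rw [Set.Finite.mem_toFinset] at hy
        obtain ⟨a, ha, rfl⟩ := hy
        exact Finset.mem_image.2 ⟨a, (Set.Finite.mem_toFinset _).2 ha, rfl⟩
      · intro hy
        obtain ⟨a, ha, rfl⟩ := Finset.mem_image.1 hy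
        exact (Set.Finite.mem_toFinset _).2 ⟨a, (Set.Finite.mem_toFinset _).1 ha, rfl⟩
    rw [map_pow, grpSum_eq_sum, map_sum, grpSum_eq_sum, map_sum, himg,
      Finset.sum_image (fun a _ b _ hab => hinj hab)]
    simp_rw [hΦsingle]
    rw [sum_pow_char]
    simp_rw [MonoidAlgebra.single_pow]
    norm_num
  -- constancy of membership in the image on basic sets
  haveI : Fact (1 < q) := ⟨hq.one_lt⟩
  have hconst : ∀ Y ∈ A.basicSets, ∀ z ∈ Y, ∀ z' ∈ Y,
      (z ∈ (· ^ q) '' X ↔ z' ∈ (· ^ q) '' X) := by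
    intro Y hY z hz z' hz'
    have h2 : (grpSum X ^ q).coeff z = (grpSum X ^ q).coeff z' :=
      apply_eq_of_mem_span (pow_mem_span hX q) hY hz hz'
    have h3 : (((grpSum ((· ^ q) '' X)).coeff z : ℤ) : ZMod q)
        = (((grpSum ((· ^ q) '' X)).coeff z' : ℤ) : ZMod q) := by
      rw [← hΦapply, ← hΦapply, ← key, hΦapply, hΦapply, h2]
    rw [grpSum_apply, grpSum_apply] at h3
    by_cases m1 : z ∈ (· ^ q) '' X <;> by_cases m2 : z' ∈ (· ^ q) '' X <;>
      simp [m1, m2] at h3 ⊢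
  apply isASet_of_forall
  intro g hg
  obtain ⟨Y, hY, hgY⟩ := A.cover g
  exact ⟨Y, hY, hgY, fun y hy => (hconst Y hY y hy g hgY).2 hg⟩

lemma pow_image_aset [Nontrivial G] :
    ∀ (m : ℕ), Nat.Coprime m (Fintype.card G) → ∀ {S : Set G},
      A.IsASet S → A.IsASet ((· ^ m) '' S) := by
  intro m
  induction m using Nat.strong_induction_on with
  | _ m ih =>
    intro hm S hS
    rcases eq_or_ne m 1 with rfl | hm1
    · have : (· ^ 1) '' S = S := by simp
      rwa [this]
    have hm0 : m ≠ 0 := by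
      rintro rfl
      rw [Nat.coprime_zero_left] at hm
      have h1 : 1 < Fintype.card G := Fintype.one_lt_card
      omega
    set q := m.minFac with hqdef
    have hqp : q.Prime := Nat.minFac_prime hm1
    have hqd : q ∣ m := Nat.minFac_dvd m
    have hq' : Nat.Coprime q (Fintype.card G) := Nat.Coprime.coprime_dvd_left hqd hm
    have hSq : A.IsASet ((· ^ q) '' S) := by
      obtain ⟨T, hT, rfl⟩ := hS
      have himg : ((· ^ q) '' ⋃₀ T) = ⋃ Y : T, ((· ^ q) '' (Y : Set G)) := by
        rw [Set.sUnion_eq_iUnion, Set.image_iUnion]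
      rw [himg]
      exact isASet_iUnion fun Y => pow_prime_image_aset hqp hq' (hT Y.2)
    have hlt : m / q < m := Nat.div_lt_self (Nat.pos_of_ne_zero hm0) hqp.one_lt
    have hcop : Nat.Coprime (m / q) (Fintype.card G) :=
      Nat.Coprime.coprime_dvd_left (Nat.div_dvd_of_dvd hqd) hm
    have h2 := ih (m / q) hlt hcop hSq
    have hcomp : ((· ^ (m / q)) '' ((· ^ q) '' S)) = (· ^ m) '' S := by
      rw [Set.image_image]
      have : (fun x : G => (x ^ q) ^ (m / q)) = (· ^ m) := by
        funext x
        rw [← pow_mul, Nat.mul_div_cancel' hqd]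
      rw [this]
    rwa [hcomp] at h2

lemma mulAut_pow_rep (p : ℕ) [Fact p.Prime] (v : MulAut (Multiplicative (ZMod p))) :
    ∃ t : ℕ, ¬ (p ∣ t) ∧ ∀ x, v x = x ^ t := by
  classical
  haveI : NeZero p := ⟨(Fact.out : p.Prime).ne_zero⟩
  set g : Multiplicative (ZMod p) := Multiplicative.ofAdd 1 with hg
  set t : ℕ := ((v g).toAdd).val with ht
  have hrep : ∀ x : Multiplicative (ZMod p), x = g ^ (x.toAdd.val) := by
    intro x
    apply Multiplicative.toAdd.injective
    rw [toAdd_pow]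
    show x.toAdd = x.toAdd.val • (1 : ZMod p)
    rw [nsmul_eq_mul, mul_one]
    exact (ZMod.natCast_rightInverse x.toAdd).symm
  have hvg : v g = g ^ t := hrep (v g)
  have hmain : ∀ x, v x = x ^ t := by
    intro x
    calc v x = v (g ^ x.toAdd.val) := by rw [← hrep x]
      _ = (v g) ^ x.toAdd.val := map_pow v g _
      _ = (g ^ t) ^ x.toAdd.val := by rw [hvg]
      _ = (g ^ x.toAdd.val) ^ t := by rw [← pow_mul, ← pow_mul']
      _ = x ^ t := by rw [← hrep x]
  refine ⟨t, ?_, hmain⟩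
  intro hdvd
  have htlt : t < p := ZMod.val_lt _
  have ht0 : t = 0 := by
    rcases Nat.eq_zero_or_pos t with h | h
    · exact h
    · exact absurd (Nat.le_of_dvd h hdvd) (not_le.2 htlt)
  have hval : ((v g).toAdd).val = 0 := by rw [ht] at ht0; exact ht0
  have h2 : (v g).toAdd = 0 := by
    have hri := ZMod.natCast_rightInverse (n := p) (v g).toAdd
    rw [← hri, hval]
    simp
  have h3 : v g = 1 := by
    apply Multiplicative.toAdd.injective
    simpa using h2
  have h4 : g = 1 := v.injective (by rw [h3, map_one])
  haveI : Fact (1 < p) := ⟨(Fact.out : p.Prime).one_lt⟩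
  have h5 : (1 : ZMod p) = 0 := by
    have := congrArg Multiplicative.toAdd h4
    simpa [hg] using this
  exact one_ne_zero h5

end SRAux

namespace SRAux

lemma exists_m (p t : ℕ) (hp3 : 3 < p) (hpp : p.Prime) (ht : ¬ p ∣ t) :
    ∃ m : ℕ, m % 3 = 1 % 3 ∧ m % p = t % p ∧ Nat.Coprime m (9 * p) := by
  have hco : Nat.Coprime 3 p := (Nat.coprime_primes (by norm_num) hpp).2 (by omega)
  obtain ⟨m, hm1, hm2⟩ := Nat.chineseRemainder hco 1 t
  have hm1' : m % 3 = 1 % 3 := hm1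
  have hm2' : m % p = t % p := hm2
  refine ⟨m, hm1', hm2', ?_⟩
  have h3 : Nat.Coprime m 3 := by
    rw [Nat.coprime_comm, Nat.Prime.coprime_iff_not_dvd (by norm_num)]
    intro hdvd
    have h0 : m % 3 = 0 := Nat.dvd_iff_mod_eq_zero.1 hdvd
    omega
  have hpm : Nat.Coprime m p := by
    rw [Nat.coprime_comm, Nat.Prime.coprime_iff_not_dvd hpp]
    intro hdvd
    have h0 : m % p = 0 := Nat.dvd_iff_mod_eq_zero.1 hdvd
    exact ht (Nat.dvd_of_mod_eq_zero (by omega))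
  have h9 : Nat.Coprime m 9 := by
    have := h3.pow_right 2
    norm_num at this
    exact this
  exact Nat.Coprime.mul_right h9 hpm

end SRAux

theorem fibre_partition_is_orbit_partition (p : ℕ) [Fact p.Prime] (hp : 3 < p)
    (A : SchurRing (Multiplicative (ZMod 3 × ZMod 3) × Multiplicative (ZMod p)))
    -- 𝒜 is dense: A = E₉ × 1 and P = 1 × C_p are 𝒜-subgroups
    (hdenseA : A.IsASubgroup ((⊤ : Subgroup (Multiplicative (ZMod 3 × ZMod 3))).prod
            (⊥ : Subgroup (Multiplicative (ZMod p)))))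
    (hdenseP : A.IsASubgroup ((⊥ : Subgroup (Multiplicative (ZMod 3 × ZMod 3))).prod
            (⊤ : Subgroup (Multiplicative (ZMod p)))))
    (X : Set (Multiplicative (ZMod 3 × ZMod 3) × Multiplicative (ZMod p)))
    (hX : X ∈ A.basicSets)
    -- V ≤ Aut(P) has the projection X_P as an orbit
    (V : Subgroup (MulAut (Multiplicative (ZMod p))))
    (hV : ∃ x, Prod.snd '' X = MulAction.orbit V x) :
    ∃ V₀ : Subgroup (MulAut (Multiplicative (ZMod p))), V₀ ≤ V ∧
      -- Π_P(X) = {X(a) : a ∈ X_A} is the set of orbits of V₀ on X_P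
      {S : Set (Multiplicative (ZMod p)) | ∃ a ∈ Prod.fst '' X, S = {x | (a, x) ∈ X}} =
        {S | ∃ x ∈ Prod.snd '' X, S = MulAction.orbit V₀ x} ∧
      -- in particular, Π_P(X) is an imprimitivity system for V on X_P
      (∀ v : MulAut (Multiplicative (ZMod p)), v ∈ V →
        ∀ S ∈ {S : Set (Multiplicative (ZMod p)) |
                ∃ a ∈ Prod.fst '' X, S = {x | (a, x) ∈ X}},
          ⇑v '' S = S ∨ (⇑v '' S) ∩ S = ∅) := by
  classical
  haveI : Fact (1 < p) := ⟨(Fact.out : p.Prime).one_lt⟩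
  obtain ⟨x₀, hx₀⟩ := hV
  have hcard : Fintype.card (Multiplicative (ZMod 3 × ZMod 3) × Multiplicative (ZMod p))
      = 9 * p := by
    rw [Fintype.card_prod, Fintype.card_multiplicative, Fintype.card_multiplicative,
      Fintype.card_prod, ZMod.card, ZMod.card]
  -- the "partial power" maps (a, x) ↦ (a, v x) send basic sets to 𝒜-sets
  have hsigma : ∀ v : MulAut (Multiplicative (ZMod p)),
      A.IsASet ((fun g : Multiplicative (ZMod 3 × ZMod 3) × Multiplicative (ZMod p) =>
        (g.1, v g.2)) '' X) := by
    intro v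
    obtain ⟨t, hpt, hv⟩ := SRAux.mulAut_pow_rep p v
    obtain ⟨m, hm3, hmp, hcop⟩ := SRAux.exists_m p t hp Fact.out hpt
    have hpow : ∀ g : Multiplicative (ZMod 3 × ZMod 3) × Multiplicative (ZMod p),
        g ^ m = (g.1, v g.2) := by
      intro g
      have h1 : g ^ m = (g.1 ^ m, g.2 ^ m) := rfl
      rw [h1]
      have hA3 : g.1 ^ (3 : ℕ) = 1 := by
        apply Multiplicative.toAdd.injective
        rw [toAdd_pow]
        have hz : ∀ z : ZMod 3 × ZMod 3, (3 : ℕ) • z = 0 := by decide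
        simpa using hz _
      have hP : g.2 ^ (p : ℕ) = 1 := by
        apply Multiplicative.toAdd.injective
        rw [toAdd_pow]
        show p • (Multiplicative.toAdd g.2) = Multiplicative.toAdd (1 : Multiplicative (ZMod p))
        rw [nsmul_eq_mul]
        simp [ZMod.natCast_self]
      have e1 : g.1 ^ m = g.1 := by
        rw [pow_eq_pow_mod m hA3, hm3]
        norm_num
      have e2 : g.2 ^ m = v g.2 := by
        rw [pow_eq_pow_mod m hP, hmp, ← pow_eq_pow_mod t hP, hv]
      rw [e1, e2]
    have himg : (fun g : Multiplicative (ZMod 3 × ZMod 3) × Multiplicative (ZMod p) =>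
        (g.1, v g.2)) '' X = (· ^ m) '' X := by
      refine (Set.image_congr fun g _ => ?_).symm
      exact hpow g
    rw [himg]
    exact SRAux.pow_image_aset m (by rw [hcard]; exact hcop)
      ⟨{X}, by simpa using hX, (Set.sUnion_singleton X).symm⟩
  -- injectivity of the partial power maps
  have hinjσ : ∀ v : MulAut (Multiplicative (ZMod p)),
      Function.Injective (fun g : Multiplicative (ZMod 3 × ZMod 3) × Multiplicative (ZMod p) =>
        (g.1, v g.2)) := by
    intro v g1 g2 h
    have h' : (g1.1, v g1.2) = (g2.1, v g2.2) := h
    obtain ⟨h1, h2⟩ := Prod.mk.inj h'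
    exact Prod.ext h1 (v.injective h2)
  -- the subgroup V₀
  let V₀ : Subgroup (MulAut (Multiplicative (ZMod p))) :=
    { carrier := {v | v ∈ V ∧
        (fun g : Multiplicative (ZMod 3 × ZMod 3) × Multiplicative (ZMod p) =>
          (g.1, v g.2)) '' X = X}
      one_mem' := by
        refine ⟨V.one_mem, ?_⟩
        have h1 : (fun g : Multiplicative (ZMod 3 × ZMod 3) × Multiplicative (ZMod p) =>
            (g.1, (1 : MulAut (Multiplicative (ZMod p))) g.2)) = fun g => g := by
          funext g
          show (g.1, g.2) = g
          exact Prod.mk.eta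
        rw [h1, Set.image_id']
      mul_mem' := by
        rintro v w ⟨hvV, hvX⟩ ⟨hwV, hwX⟩
        refine ⟨V.mul_mem hvV hwV, ?_⟩
        have hcomp : (fun g : Multiplicative (ZMod 3 × ZMod 3) × Multiplicative (ZMod p) =>
              (g.1, (v * w) g.2))
            = (fun g : Multiplicative (ZMod 3 × ZMod 3) × Multiplicative (ZMod p) =>
                (g.1, v g.2))
              ∘ (fun g : Multiplicative (ZMod 3 × ZMod 3) × Multiplicative (ZMod p) =>
                (g.1, w g.2)) := by
          funext g
          rfl
        rw [hcomp, Set.image_comp, hwX, hvX]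
      inv_mem' := by
        rintro v ⟨hvV, hvX⟩
        refine ⟨V.inv_mem hvV, ?_⟩
        conv_lhs => rw [← hvX]
        rw [← Set.image_comp]
        have hcomp : ((fun g : Multiplicative (ZMod 3 × ZMod 3) × Multiplicative (ZMod p) =>
              (g.1, v⁻¹ g.2))
            ∘ (fun g : Multiplicative (ZMod 3 × ZMod 3) × Multiplicative (ZMod p) =>
              (g.1, v g.2))) = id := by
          funext g
          show (g.1, v⁻¹ (v g.2)) = g
          rw [MulAut.inv_apply_self]
        rw [hcomp, Set.image_id] }
  have hVle : V₀ ≤ V := fun v hv => hv.1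
  -- the key fact: fibres of X are exactly V₀-orbits
  have key : ∀ (a : Multiplicative (ZMod 3 × ZMod 3)) (x : Multiplicative (ZMod p)),
      (a, x) ∈ X → {y | (a, y) ∈ X} = MulAction.orbit V₀ x := by
    intro a x hax
    ext y
    simp only [Set.mem_setOf_eq]
    constructor
    · intro hay
      have hx1 : x ∈ MulAction.orbit V x₀ := by
        rw [← hx₀]; exact ⟨(a, x), hax, rfl⟩
      have hy1 : y ∈ MulAction.orbit V x₀ := by
        rw [← hx₀]; exact ⟨(a, y), hay, rfl⟩
      obtain ⟨s, hs⟩ := MulAction.mem_orbit_iff.1 hx1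
      obtain ⟨u, hu⟩ := MulAction.mem_orbit_iff.1 hy1
      have h5 : (u * s⁻¹ : ↥V) • x = y := by
        rw [mul_smul, ← hs, inv_smul_smul, hu]
      set v : MulAut (Multiplicative (ZMod p)) := ↑(u * s⁻¹) with hvdef
      have hvx : v x = y := h5
      have hmem : (a, y) ∈ (fun g : Multiplicative (ZMod 3 × ZMod 3) × Multiplicative (ZMod p) =>
          (g.1, v g.2)) '' X := ⟨(a, x), hax, by simp [hvx]⟩
      have hXsub : X ⊆ (fun g : Multiplicative (ZMod 3 × ZMod 3) × Multiplicative (ZMod p) =>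
          (g.1, v g.2)) '' X :=
        SRAux.basic_subset_of_aset_mem (hsigma v) hX hay hmem
      have hXeq : (fun g : Multiplicative (ZMod 3 × ZMod 3) × Multiplicative (ZMod p) =>
          (g.1, v g.2)) '' X = X := by
        refine (Set.eq_of_subset_of_ncard_le hXsub ?_ (Set.toFinite _)).symm
        rw [Set.ncard_image_of_injective _ (hinjσ v)]
      have hvV₀ : v ∈ V₀ := ⟨(u * s⁻¹).2, hXeq⟩
      exact MulAction.mem_orbit_iff.2 ⟨⟨v, hvV₀⟩, hvx⟩
    · intro hy
      obtain ⟨u, hu⟩ := MulAction.mem_orbit_iff.1 hy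
      have hu2 : (fun g : Multiplicative (ZMod 3 × ZMod 3) × Multiplicative (ZMod p) =>
          (g.1, (↑u : MulAut (Multiplicative (ZMod p))) g.2)) '' X = X := u.2.2
      have hmem : (a, (↑u : MulAut (Multiplicative (ZMod p))) x) ∈
          (fun g : Multiplicative (ZMod 3 × ZMod 3) × Multiplicative (ZMod p) =>
            (g.1, (↑u : MulAut (Multiplicative (ZMod p))) g.2)) '' X := ⟨(a, x), hax, rfl⟩
      rw [hu2] at hmem
      have : (↑u : MulAut (Multiplicative (ZMod p))) x = y := hu
      rwa [this] at hmem
  -- commutativity of Aut(C_p)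
  have hcomm : ∀ (v w : MulAut (Multiplicative (ZMod p))) (x : Multiplicative (ZMod p)),
      v (w x) = w (v x) := by
    intro v w x
    obtain ⟨t, _, hvt⟩ := SRAux.mulAut_pow_rep p v
    obtain ⟨s, _, hws⟩ := SRAux.mulAut_pow_rep p w
    simp only [hvt, hws]
    rw [← pow_mul, ← pow_mul, Nat.mul_comm]
  have horb : ∀ (v : MulAut (Multiplicative (ZMod p))) (x : Multiplicative (ZMod p)),
      ⇑v '' MulAction.orbit V₀ x = MulAction.orbit V₀ (v x) := by
    intro v x
    ext z
    constructor
    · rintro ⟨y, hy, rfl⟩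
      obtain ⟨u, hu⟩ := MulAction.mem_orbit_iff.1 hy
      refine MulAction.mem_orbit_iff.2 ⟨u, ?_⟩
      have h1 : (↑u : MulAut (Multiplicative (ZMod p))) x = y := hu
      show (↑u : MulAut (Multiplicative (ZMod p))) (v x) = v y
      rw [← h1]
      exact (hcomm v (↑u) x).symm
    · intro hz
      obtain ⟨u, hu⟩ := MulAction.mem_orbit_iff.1 hz
      refine ⟨(↑u : MulAut (Multiplicative (ZMod p))) x, MulAction.mem_orbit x u, ?_⟩
      show v ((↑u : MulAut (Multiplicative (ZMod p))) x) = z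
      rw [hcomm v (↑u) x]
      exact hu
  refine ⟨V₀, hVle, ?_, ?_⟩
  · ext S
    simp only [Set.mem_setOf_eq]
    constructor
    · rintro ⟨a, ⟨g, hgX, rfl⟩, rfl⟩
      refine ⟨g.2, ⟨g, hgX, rfl⟩, ?_⟩
      exact key g.1 g.2 (by rwa [Prod.mk.eta])
    · rintro ⟨x, ⟨g, hgX, rfl⟩, rfl⟩
      exact ⟨g.1, ⟨g, hgX, rfl⟩, (key g.1 g.2 (by rwa [Prod.mk.eta])).symm⟩
  · intro v hvV S hS
    simp only [Set.mem_setOf_eq] at hS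
    obtain ⟨a, ⟨g, hgX, rfl⟩, rfl⟩ := hS
    rw [key g.1 g.2 (by rwa [Prod.mk.eta]), horb]
    by_cases hint : (MulAction.orbit V₀ (v g.2) ∩ MulAction.orbit V₀ g.2).Nonempty
    · left
      obtain ⟨z, hz1, hz2⟩ := hint
      obtain ⟨u1, hu1⟩ := MulAction.mem_orbit_iff.1 hz1
      obtain ⟨u2, hu2⟩ := MulAction.mem_orbit_iff.1 hz2
      have h6 : v g.2 = (u1⁻¹ * u2) • g.2 := by
        rw [mul_smul, hu2, ← hu1, inv_smul_smul]
      rw [h6, MulAction.orbit_smul]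
    · right
      exact Set.not_nonempty_iff_eq_empty.1 hint
end

section
/- Let p > 3 be a prime, G = A × P with A = E_9 and P = C_p, let 𝒜 be a dense S-ring over G, and let X be a basic set of 𝒜. Then the partition Π_A(X) of X_A into the classes of the equivalence relation a ∼ b ⇔ X(a) = X(b) is a regular partition of X_A. -/
open scoped Pointwise

open scoped BigOperators

/-- Componentwise (Hadamard) multiplication `∘` in the group ring `ℤG`. -/
noncomputable def hadamard {G : Type*} [Group G] [Fintype G]
    (a b : MonoidAlgebra ℤ G) : MonoidAlgebra ℤ G :=
  MonoidAlgebra.ofCoeff (Finsupp.zipWith (· * ·) (mul_zero 0) a.coeff b.coeff)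

/-- A regular partition of a set `X` (an orbit of a subgroup of `Aut(G)`):
a uniform partition satisfying (R1), (R2), (R3) in case `X = X⁻¹`. -/
def IsRegularPartition {G : Type*} [CommGroup G] [Fintype G]
    (X : Set G) (P : Set (Set G)) : Prop :=
  (∀ Y ∈ P, Y ⊆ X ∧ Y.Nonempty) ∧
  (∀ x ∈ X, ∃! Y : Set G, Y ∈ P ∧ x ∈ Y) ∧
  (∀ Y ∈ P, ∀ Z ∈ P, Y.ncard = Z.ncard) ∧
  (X⁻¹ = X →
    ((fun Y : Set G => Y⁻¹) '' P = P) ∧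
    ((∀ Y ∈ P, Y⁻¹ = Y) ∨ (∀ Y ∈ P, Y⁻¹ ≠ Y)) ∧
    (∃ α : ℕ, hadamard (grpSum X) (∑ᶠ Y ∈ P, grpSum Y * grpSum Y⁻¹) =
      (α : ℤ) • grpSum X))

/-- `(M, L)` is a standard pair for the basic set `X` and the regular
partition `P`: `L ≤ M ≤ Aut(G)`, `P` is the set of orbits of `L` on `X`,
`X` is an orbit of `M`, and `L` is the kernel of the action of `M` on `P`. -/
def IsStandardPair {G : Type*} [Group G] [Fintype G]
    (X : Set G) (P : Set (Set G)) (M L : Subgroup (MulAut G)) : Prop :=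
  L ≤ M ∧ (∃ x, X = MulAction.orbit M x) ∧
  (P = {Z : Set G | ∃ x ∈ X, Z = MulAction.orbit L x}) ∧
  (∀ m : MulAut G, m ∈ L ↔ m ∈ M ∧ ∀ Y ∈ P, ⇑m '' Y = Y)

/-- The elementary abelian group of order 9. -/
abbrev E₉ := Multiplicative (ZMod 3 × ZMod 3)

attribute [local instance 0] Classical.propDecidable

section Infra

variable {G : Type*} [CommGroup G] [Fintype G]

open Finset MonoidAlgebra

/-- finset of a set -/
noncomputable def fs (X : Set G) : Finset G := Finset.univ.filter (· ∈ X)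

@[simp] lemma mem_fs {X : Set G} {g : G} : g ∈ fs X ↔ g ∈ X := by
  simp [fs]

lemma grpSum_eq_sum (X : Set G) : grpSum X = ∑ x ∈ fs X, single x (1 : ℤ) := by
  rw [grpSum, fs, Finset.sum_filter]
  refine Finset.sum_congr rfl fun x _ => ?_
  by_cases h : x ∈ X <;> simp [Set.indicator_apply, h]

lemma grpSum_apply (X : Set G) (g : G) :
    (grpSum X).coeff g = if g ∈ X then (1 : ℤ) else 0 := by
  rw [grpSum_eq_sum, MonoidAlgebra.coeff_sum, Finset.sum_apply']
  by_cases h : g ∈ X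
  · rw [Finset.sum_eq_single g]
    · simp [h]
    · intro b _ hb; simp [Finsupp.single_apply, hb]
    · intro hg; exact absurd (mem_fs.2 h) hg
  · rw [Finset.sum_eq_zero, if_neg h]
    intro b hb
    have : b ≠ g := fun e => h (e ▸ mem_fs.1 hb)
    simp [Finsupp.single_apply, this]

lemma coeff_mul (S T : Set G) (y : G) :
    (grpSum S * grpSum T).coeff y = (((fs T)).filter (fun x => y * x⁻¹ ∈ S)).card := by
  rw [grpSum_eq_sum, grpSum_eq_sum, Finset.sum_mul_sum]
  simp_rw [MonoidAlgebra.single_mul_single, mul_one]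
  rw [MonoidAlgebra.coeff_sum, Finset.sum_apply']
  have h1 : ∀ g ∈ fs S, (∑ x ∈ fs T, single (g*x) (1:ℤ)).coeff y
      = ∑ x ∈ fs T, if g = y * x⁻¹ then (1:ℤ) else 0 := by
    intro g _
    rw [MonoidAlgebra.coeff_sum, Finset.sum_apply']
    refine Finset.sum_congr rfl fun x _ => ?_
    rw [MonoidAlgebra.coeff_single, Finsupp.single_apply]
    refine if_congr ?_ rfl rfl
    constructor
    · rintro rfl; group
    · rintro rfl; group
  rw [Finset.sum_congr rfl h1, Finset.sum_comm, Finset.card_filter]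
  push_cast
  refine Finset.sum_congr rfl fun x _ => ?_
  by_cases h : y * x⁻¹ ∈ S
  · rw [Finset.sum_ite_eq' (fs S) (y * x⁻¹) (fun _ => (1:ℤ))]
    simp [h]
  · rw [if_neg h, Finset.sum_eq_zero]
    intro g hg
    rw [if_neg]
    rintro rfl
    exact h (mem_fs.1 hg)

lemma coeff_mul_inv (S T : Set G) (y : G) :
    (grpSum S * grpSum T⁻¹).coeff y = (((fs T)).filter (fun x => y * x ∈ S)).card := by
  rw [_root_.coeff_mul]
  congr 1
  refine Finset.card_nbij' (fun x => x⁻¹) (fun x => x⁻¹) ?_ ?_ ?_ ?_ <;>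
    simp +contextual [Set.mem_inv, Set.MapsTo, Set.LeftInvOn, Set.RightInvOn, Set.EqOn]

end Infra

section Span

variable {G : Type*} [CommGroup G] [Fintype G] (A : SchurRing G)

open Finset MonoidAlgebra

/-- two basic sets sharing a point are equal -/
lemma basic_eq_of_mem {X Y : Set G} (hX : X ∈ A.basicSets) (hY : Y ∈ A.basicSets)
    {g : G} (hgX : g ∈ X) (hgY : g ∈ Y) : X = Y := by
  by_contra hne
  have := A.disjoint' X hX Y hY hne
  exact absurd (Set.mem_inter hgX hgY) (by rw [this]; exact id)

/-- T1 : coefficients of span elements are constant on basic sets -/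
lemma coeff_const {ξ : MonoidAlgebra ℤ G}
    (hξ : ξ ∈ Submodule.span ℤ (grpSum '' A.basicSets))
    {Y : Set G} (hY : Y ∈ A.basicSets) {g h : G} (hg : g ∈ Y) (hh : h ∈ Y) :
    ξ.coeff g = ξ.coeff h := by
  induction hξ using Submodule.span_induction with
  | mem x hx =>
      obtain ⟨Z, hZ, rfl⟩ := hx
      rw [grpSum_apply, grpSum_apply]
      by_cases hgZ : g ∈ Z
      · have : Y = Z := basic_eq_of_mem A hY hZ hg hgZ
        rw [if_pos hgZ, if_pos (this ▸ hh)]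
      · rw [if_neg hgZ, if_neg]
        intro hhZ
        exact hgZ ((basic_eq_of_mem A hY hZ hh hhZ) ▸ hg)
  | zero => rfl
  | add x y hx hy ihx ihy => rw [MonoidAlgebra.coeff_add, Finsupp.add_apply, Finsupp.add_apply, ihx, ihy]
  | smul a x hx ih => rw [MonoidAlgebra.coeff_smul, Finsupp.smul_apply, Finsupp.smul_apply, ih]

/-- the span is closed under multiplication -/
lemma span_mul_closed {ξ η : MonoidAlgebra ℤ G}
    (hξ : ξ ∈ Submodule.span ℤ (grpSum '' A.basicSets))
    (hη : η ∈ Submodule.span ℤ (grpSum '' A.basicSets)) :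
    ξ * η ∈ Submodule.span ℤ (grpSum '' A.basicSets) := by
  induction hξ using Submodule.span_induction with
  | mem x hx =>
      induction hη using Submodule.span_induction with
      | mem y hy =>
          obtain ⟨Z, hZ, rfl⟩ := hx
          obtain ⟨W, hW, rfl⟩ := hy
          exact A.mul_mem Z hZ W hW
      | zero => simp
      | add y z hy hz ihy ihz => rw [mul_add]; exact Submodule.add_mem _ ihy ihz
      | smul a y hy ih => rw [mul_smul_comm]; exact Submodule.smul_mem _ _ ih
  | zero => simp
  | add x y hx hy ihx ihy => rw [add_mul]; exact Submodule.add_mem _ ihx ihy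
  | smul a x hx ih => rw [smul_mul_assoc]; exact Submodule.smul_mem _ _ ih

lemma span_pow_mem {X : Set G} (hX : X ∈ A.basicSets) (n : ℕ) :
    grpSum X ^ (n+1) ∈ Submodule.span ℤ (grpSum '' A.basicSets) := by
  induction n with
  | zero => simpa using Submodule.subset_span (Set.mem_image_of_mem grpSum hX)
  | succ n ih =>
      rw [pow_succ]
      exact span_mul_closed A ih (Submodule.subset_span (Set.mem_image_of_mem grpSum hX))

/-- an 𝒜-closed set: every basic set is inside or disjoint -/
def AClosed (S : Set G) : Prop := ∀ Y ∈ A.basicSets, Y ⊆ S ∨ Y ∩ S = ∅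

lemma aclosed_of_isaset {S : Set G} (h : ∃ T ⊆ A.basicSets, S = ⋃₀ T) :
    AClosed A S := by
  obtain ⟨T, hT, rfl⟩ := h
  intro Y hY
  by_cases hint : Y ∩ ⋃₀ T = ∅
  · exact Or.inr hint
  · left
    obtain ⟨g, hg⟩ := Set.nonempty_iff_ne_empty.2 hint
    obtain ⟨Z, hZ, hgZ⟩ := Set.mem_sUnion.1 hg.2
    have : Y = Z := basic_eq_of_mem A hY (hT hZ) hg.1 hgZ
    exact this ▸ fun x hx => Set.mem_sUnion.2 ⟨Z, hZ, hx⟩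

lemma basic_subset_of_aclosed {X S : Set G} (hX : X ∈ A.basicSets)
    (hS : AClosed A S) (hint : (X ∩ S).Nonempty) : X ⊆ S := by
  rcases hS X hX with h | h
  · exact h
  · rw [h] at hint; simp at hint

/-- basic sets form a finite family -/
noncomputable def basicsF : Finset (Set G) := (A.basicSets.toFinite).toFinset

@[simp] lemma mem_basicsF {Y : Set G} : Y ∈ basicsF A ↔ Y ∈ A.basicSets :=
  Set.Finite.mem_toFinset _

lemma grpSum_eq_sum_basics {S : Set G} (hS : AClosed A S) :
    grpSum S = ∑ Y ∈ (basicsF A).filter (· ⊆ S), grpSum Y := by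
  ext g
  rw [grpSum_apply, MonoidAlgebra.coeff_sum, Finset.sum_apply']
  have h1 : ∀ Y ∈ (basicsF A).filter (· ⊆ S), (grpSum Y).coeff g = if g ∈ Y then (1:ℤ) else 0 :=
    fun Y _ => grpSum_apply Y g
  rw [Finset.sum_congr rfl h1]
  by_cases hg : g ∈ S
  · obtain ⟨Y₀, hY₀, hgY₀⟩ := A.cover g
    have hY₀S : Y₀ ⊆ S := basic_subset_of_aclosed A hY₀ hS ⟨g, hgY₀, hg⟩
    rw [if_pos hg, Finset.sum_eq_single Y₀]
    · rw [if_pos hgY₀]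
    · intro Z hZ hne
      rw [Finset.mem_filter, mem_basicsF A] at hZ
      rw [if_neg]
      intro hgZ
      exact hne (basic_eq_of_mem A hZ.1 hY₀ hgZ hgY₀)
    · intro habs
      exact (habs (Finset.mem_filter.2 ⟨(mem_basicsF A).2 hY₀, hY₀S⟩)).elim
  · rw [if_neg hg, Finset.sum_eq_zero]
    intro Z hZ
    rw [Finset.mem_filter] at hZ
    rw [if_neg]
    intro hgZ
    exact hg (hZ.2 hgZ)

lemma grpSum_mem_span_of_aclosed {S : Set G} (hS : AClosed A S) :
    grpSum S ∈ Submodule.span ℤ (grpSum '' A.basicSets) := by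
  rw [grpSum_eq_sum_basics A hS]
  refine Submodule.sum_mem _ fun Y hY => ?_
  rw [Finset.mem_filter, mem_basicsF] at hY
  exact Submodule.subset_span ⟨Y, hY.1, rfl⟩

lemma aclosed_inv {S : Set G} (hS : AClosed A S) : AClosed A S⁻¹ := by
  intro Y hY
  rcases hS Y⁻¹ (A.inv_mem Y hY) with h | h
  · left; intro g hg
    rw [Set.mem_inv]
    exact h (by rw [Set.mem_inv, inv_inv]; exact hg)
  · right
    rw [Set.eq_empty_iff_forall_notMem] at h ⊢
    intro g hg
    exact h g⁻¹ ⟨by rw [Set.mem_inv, inv_inv]; exact hg.1, Set.mem_inv.1 hg.2⟩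

end Span

section PowMap

variable {G : Type*} [CommGroup G] [Fintype G] (A : SchurRing G)
variable (N : ℕ)

open Finset MonoidAlgebra

lemma pow_mod_exp (hexp : ∀ g : G, g ^ N = 1) (g : G) (m : ℕ) : g ^ m = g ^ (m % N) := by
  conv_lhs => rw [← Nat.div_add_mod m N]
  rw [pow_add, pow_mul, hexp, one_pow, one_mul]

lemma pow_modeq_exp (hexp : ∀ g : G, g ^ N = 1) {m m' : ℕ} (h : m ≡ m' [MOD N]) (g : G) : g ^ m = g ^ m' := by
  rw [pow_mod_exp N hexp g m, pow_mod_exp N hexp g m', h]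

lemma exists_pow_one (hN : 1 < N) {q : ℕ} (hq : Nat.Coprime q N) :
    ∃ e : ℕ, 0 < e ∧ q ^ e ≡ 1 [MOD N] := by
  haveI : NeZero N := ⟨by omega⟩
  haveI : Fact (1 < N) := ⟨hN⟩
  set u : (ZMod N)ˣ := ZMod.unitOfCoprime q hq with hu
  refine ⟨orderOf u, orderOf_pos u, ?_⟩
  have h1 : u ^ orderOf u = 1 := pow_orderOf_eq_one u
  have h2 : ((q : ZMod N)) ^ orderOf u = 1 := by
    have := congrArg (Units.val) h1
    rw [Units.val_pow_eq_pow_val] at this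
    rw [ZMod.coe_unitOfCoprime] at this
    simpa using this
  have h3 : ((q ^ orderOf u : ℕ) : ZMod N) = ((1 : ℕ) : ZMod N) := by
    push_cast
    simpa using h2
  exact (ZMod.natCast_eq_natCast_iff _ _ _).1 h3

/-- reduction mod q of the group ring -/
noncomputable def modq (q : ℕ) : MonoidAlgebra ℤ G →+* MonoidAlgebra (ZMod q) G :=
  MonoidAlgebra.liftNCRingHom
    ((MonoidAlgebra.singleOneRingHom : ZMod q →+* MonoidAlgebra (ZMod q) G).comp
      (Int.castRingHom (ZMod q)))
    (MonoidAlgebra.of (ZMod q) G) (fun _ _ => Commute.all _ _)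

lemma modq_single (q : ℕ) (a : G) (b : ℤ) :
    modq q (single a b) = single a ((b : ZMod q)) := by
  show MonoidAlgebra.liftNC _ _ _ = _
  rw [MonoidAlgebra.liftNC_single]
  show (single (1:G) ((b : ZMod q))) * (single a (1 : ZMod q)) = _
  rw [MonoidAlgebra.single_mul_single, one_mul, mul_one]

lemma modq_apply (q : ℕ) (ξ : MonoidAlgebra ℤ G) (y : G) :
    (modq q ξ).coeff y = ((ξ.coeff y : ℤ) : ZMod q) := by
  induction ξ using MonoidAlgebra.induction_linear with
  | zero => simp
  | add f g hf hg => rw [map_add, MonoidAlgebra.coeff_add, MonoidAlgebra.coeff_add, Finsupp.add_apply, Finsupp.add_apply, hf, hg]; push_cast; ring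
  | single a b =>
      rw [modq_single, MonoidAlgebra.coeff_single, MonoidAlgebra.coeff_single, Finsupp.single_apply, Finsupp.single_apply]
      split <;> simp

/-- the image of a basic set under the q-th power map, q prime coprime to the
exponent, is 𝒜-closed -/
lemma pow_image_aclosed_of_prime (hN : 1 < N) (hexp : ∀ g : G, g ^ N = 1) {q : ℕ} (hq : q.Prime) (hqN : Nat.Coprime q N)
    {X : Set G} (hX : X ∈ A.basicSets) : AClosed A ((fun g => g ^ q) '' X) := by
  haveI : Fact q.Prime := ⟨hq⟩
  haveI : CharP (MonoidAlgebra (ZMod q) G) q :=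
    charP_of_injective_ringHom
      (f := (MonoidAlgebra.singleOneRingHom : ZMod q →+* MonoidAlgebra (ZMod q) G))
      (fun a b h => by simpa using congrArg (fun x => x.coeff 1) h) q
  -- injectivity of the q-power map
  obtain ⟨e, he, heq⟩ := exists_pow_one N hN hqN
  have hinj : Function.Injective (fun g : G => g ^ q) := by
    intro a b hab
    have : ∀ g : G, (g ^ q) ^ (q ^ (e-1)) = g := by
      intro g
      rw [← pow_mul]
      have : q * q ^ (e - 1) = q ^ e := by
        conv_rhs => rw [show e = 1 + (e-1) by omega]
        rw [pow_add, pow_one]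
      rw [this, pow_modeq_exp N hexp heq, pow_one]
    have hab' : a ^ q = b ^ q := hab
    rw [← this a, ← this b, hab']
  -- Frobenius computation
  have hfrob : modq q ((grpSum X) ^ q) = modq q (grpSum ((fun g => g ^ q) '' X)) := by
    rw [map_pow, grpSum_eq_sum, grpSum_eq_sum, map_sum, map_sum]
    simp_rw [modq_single, Int.cast_one]
    rw [sum_pow_char q]
    simp_rw [MonoidAlgebra.single_pow, one_pow]
    have hfs : fs ((fun g : G => g ^ q) '' X) = Finset.image (fun g : G => g ^ q) (fs X) := by
      ext z
      simp [Set.mem_image]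
    rw [hfs, Finset.sum_image (fun x _ y _ h => hinj h)]
  -- conclude closedness
  intro Y hY
  by_cases hint : Y ∩ ((fun g => g ^ q) '' X) = ∅
  · exact Or.inr hint
  · left
    obtain ⟨g0, hg0⟩ := Set.nonempty_iff_ne_empty.2 hint
    intro h hh
    by_contra hhim
    -- coefficients of grpSum X ^ q are constant on Y
    have hconst : ((grpSum X) ^ q).coeff g0 = ((grpSum X) ^ q).coeff h :=
      coeff_const A (by
        have := span_pow_mem A hX (q - 1)
        rwa [Nat.sub_add_cancel hq.one_lt.le] at this) hY hg0.1 hh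
    have h1 : (modq q ((grpSum X)^q)).coeff g0 = (modq q ((grpSum X)^q)).coeff h := by
      rw [modq_apply, modq_apply, hconst]
    rw [hfrob, modq_apply, modq_apply, grpSum_apply, grpSum_apply,
      if_pos hg0.2, if_neg hhim] at h1
    rw [Int.cast_one, Int.cast_zero] at h1
    exact one_ne_zero h1

lemma aclosed_pow_image_of_prime (hN : 1 < N) (hexp : ∀ g : G, g ^ N = 1) {q : ℕ} (hq : q.Prime) (hqN : Nat.Coprime q N)
    {S : Set G} (hS : AClosed A S) : AClosed A ((fun g => g ^ q) '' S) := by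
  intro Z hZ
  by_cases hint : Z ∩ ((fun g => g ^ q) '' S) = ∅
  · exact Or.inr hint
  · left
    obtain ⟨z, hz⟩ := Set.nonempty_iff_ne_empty.2 hint
    obtain ⟨s, hsS, hsz⟩ := hz.2
    obtain ⟨Y', hY', hsY'⟩ := A.cover s
    have hY'S : Y' ⊆ S := basic_subset_of_aclosed A hY' hS ⟨s, hsY', hsS⟩
    have hcl := pow_image_aclosed_of_prime A N hN hexp hq hqN hY'
    rcases hcl Z hZ with h | h
    · exact h.trans (Set.image_mono hY'S)
    · exact absurd (Set.mem_inter hz.1 (⟨s, hsY', hsz⟩ : z ∈ (fun g : G => g ^ q) '' Y')) (by rw [h]; exact id)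

lemma image_pow_pow (a b : ℕ) (X : Set G) :
    (fun g : G => g ^ a) '' ((fun g : G => g ^ b) '' X) = (fun g : G => g ^ (b * a)) '' X := by
  rw [← Set.image_comp]
  refine Set.image_congr fun x _ => ?_
  simp [← pow_mul]

lemma pow_image_basic_of_prime (hN : 1 < N) (hexp : ∀ g : G, g ^ N = 1) {q : ℕ} (hq : q.Prime) (hqN : Nat.Coprime q N)
    {X : Set G} (hX : X ∈ A.basicSets) : (fun g => g ^ q) '' X ∈ A.basicSets := by
  obtain ⟨e, he, heq⟩ := exists_pow_one N hN hqN
  obtain ⟨x0, hx0⟩ := A.nonempty_mem X hX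
  obtain ⟨Y, hY, hgY⟩ := A.cover (x0 ^ q)
  have him : AClosed A ((fun g => g ^ q) '' X) :=
    pow_image_aclosed_of_prime A N hN hexp hq hqN hX
  have hinj : Function.Injective (fun g : G => g ^ q) := by
    intro a b hab
    have key : ∀ g : G, (g ^ q) ^ (q ^ (e-1)) = g := by
      intro g
      rw [← pow_mul]
      have : q * q ^ (e - 1) = q ^ e := by
        conv_rhs => rw [show e = 1 + (e-1) by omega]
        rw [pow_add, pow_one]
      rw [this, pow_modeq_exp N hexp heq, pow_one]
    have hab' : a ^ q = b ^ q := hab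
    rw [← key a, ← key b, hab']
  have hYim : Y ⊆ (fun g => g ^ q) '' X :=
    basic_subset_of_aclosed A hY him ⟨x0 ^ q, hgY, ⟨x0, hx0, rfl⟩⟩
  -- iterate the power map e-1 more times on Y
  have hiter : ∀ j : ℕ, AClosed A ((fun g : G => g ^ (q ^ j)) '' Y) := by
    intro j
    induction j with
    | zero =>
        simp only [pow_zero]
        have : (fun g : G => g ^ 1) '' Y = Y := by
          simp [Set.image_congr fun x _ => pow_one x]
        rw [this]
        intro Z hZ
        by_cases hZY : Z = Y
        · exact Or.inl (hZY ▸ subset_rfl)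
        · exact Or.inr (A.disjoint' Z hZ Y hY hZY)
    | succ j ih =>
        have : (fun g : G => g ^ (q ^ (j+1))) '' Y
            = (fun g : G => g ^ q) '' ((fun g : G => g ^ (q ^ j)) '' Y) := by
          rw [image_pow_pow]
          rw [← pow_succ]
        rw [this]
        exact aclosed_pow_image_of_prime A N hN hexp hq hqN ih
  -- the (e-1)-fold iterate of Y sits inside X and is 𝒜-closed, hence equals X
  have hYX : (fun g : G => g ^ (q ^ (e-1))) '' Y ⊆ X := by
    intro z hz
    obtain ⟨y, hyY, rfl⟩ := hz
    obtain ⟨x, hxX, rfl⟩ := hYim hyY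
    have : (x ^ q) ^ (q ^ (e-1)) = x := by
      rw [← pow_mul]
      have h2 : q * q ^ (e - 1) = q ^ e := by
        conv_rhs => rw [show e = 1 + (e-1) by omega]
        rw [pow_add, pow_one]
      rw [h2, pow_modeq_exp N hexp heq, pow_one]
    show (x ^ q) ^ (q ^ (e-1)) ∈ X
    rw [this]
    exact hxX
  have hXeq : (fun g : G => g ^ (q ^ (e-1))) '' Y = X := by
    obtain ⟨y0, hy0⟩ := A.nonempty_mem Y hY
    have hne : ((fun g : G => g ^ (q ^ (e-1))) '' Y).Nonempty := ⟨_, Set.mem_image_of_mem _ hy0⟩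
    rcases hiter (e-1) X hX with h | h
    · exact Set.Subset.antisymm hYX h
    · obtain ⟨z, hz⟩ := hne
      exact absurd (Set.mem_inter (hYX hz) hz) (by rw [h]; exact id)
  -- so |Y| = |X| = |image|, and Y ⊆ image gives equality
  have hcard : ((fun g : G => g ^ q) '' X).ncard = Y.ncard := by
    rw [Set.ncard_image_of_injective _ hinj, ← hXeq,
      Set.ncard_image_of_injective _ (by
        intro a b hab
        have key : ∀ g : G, (g ^ (q^(e-1))) ^ q = g := by
          intro g
          rw [← pow_mul]
          have h2 : q ^ (e-1) * q = q ^ e := by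
            conv_rhs => rw [show e = (e-1) + 1 by omega]
            rw [pow_add, pow_one]
          rw [h2, pow_modeq_exp N hexp heq, pow_one]
        have hab' : a ^ (q ^ (e-1)) = b ^ (q ^ (e-1)) := hab
        rw [← key a, ← key b, hab'])]
  have hfin : ((fun g : G => g ^ q) '' X).Finite := Set.toFinite _
  have : Y = (fun g : G => g ^ q) '' X :=
    Set.eq_of_subset_of_ncard_le hYim (le_of_eq hcard) hfin
  rw [← this]
  exact hY

/-- main power theorem: for `m` coprime to the exponent, the image of a basic
set under `g ↦ g ^ m` is basic -/
theorem pow_image_basic (hN : 1 < N) (hexp : ∀ g : G, g ^ N = 1) {m : ℕ} (hm : Nat.Coprime m N)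
    {X : Set G} (hX : X ∈ A.basicSets) : (fun g => g ^ m) '' X ∈ A.basicSets := by
  induction m using Nat.recOnMul generalizing X with
  | zero =>
      exact absurd hm (by rw [Nat.coprime_zero_left]; omega)
  | one =>
      have : (fun g : G => g ^ 1) '' X = X := by
        simp [Set.image_congr fun x _ => pow_one x]
      rw [this]; exact hX
  | prime p hp => exact pow_image_basic_of_prime A N hN hexp hp hm hX
  | mul a b ha hb =>
      have hca : Nat.Coprime a N := Nat.Coprime.coprime_dvd_left (dvd_mul_right a b) hm
      have hcb : Nat.Coprime b N := Nat.Coprime.coprime_dvd_left (dvd_mul_left b a) hm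
      rw [show (a * b) = b * a from Nat.mul_comm a b, ← image_pow_pow]
      exact ha hca (hb hcb hX)

end PowMap

abbrev Pp (p : ℕ) := Multiplicative (ZMod p)
abbrev Gp (p : ℕ) := E₉ × Multiplicative (ZMod p)

section Specific

open Finset MonoidAlgebra

variable (p : ℕ) [Fact p.Prime]

lemma e9_pow3 (a : E₉) : a ^ 3 = 1 := by
  have h : ∀ x : ZMod 3 × ZMod 3, (3 : ℕ) • x = 0 := by decide
  rw [← ofAdd_toAdd a, ← ofAdd_nsmul, h, ofAdd_zero]

lemma e9_sq (a : E₉) : a ^ 2 = a⁻¹ := by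
  refine eq_inv_of_mul_eq_one_left ?_
  rw [← pow_succ, e9_pow3]

lemma pp_powp (s : Pp p) : s ^ p = 1 := by
  have h : (p : ℕ) • s.toAdd = 0 := by
    simp [nsmul_eq_mul, ZMod.natCast_self]
  rw [← ofAdd_toAdd s, ← ofAdd_nsmul, h, ofAdd_zero]

lemma gp_exp (g : Gp p) : g ^ (3 * p) = 1 := by
  have h1 : (g ^ (3 * p)).1 = 1 := by
    rw [Prod.pow_fst, pow_mul, e9_pow3, one_pow]
  have h2 : (g ^ (3 * p)).2 = 1 := by
    rw [Prod.pow_snd, mul_comm, pow_mul, pp_powp, one_pow]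
  exact Prod.ext h1 h2

lemma gp_exp_lt : 1 < 3 * p := by
  have := (Fact.out : p.Prime).two_le
  omega

/-- `ψ t` raises the `P`-component to the `t`-th power -/
def ψ (t : (ZMod p)ˣ) : Gp p → Gp p := fun g => (g.1, g.2 ^ ((t : ZMod p)).val)

/-- `ι` inverts the `E₉`-component -/
def ι : Gp p → Gp p := fun g => (g.1⁻¹, g.2)

lemma pp_pow_modeq (s : Pp p) {m m' : ℕ} (h : m ≡ m' [MOD p]) : s ^ m = s ^ m' :=
  pow_modeq_exp p (pp_powp p) h s

lemma pp_pow_val_mul (s : Pp p) (u v : (ZMod p)ˣ) :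
    (s ^ ((u : ZMod p)).val) ^ ((v : ZMod p)).val
      = s ^ (((u * v : (ZMod p)ˣ) : ZMod p)).val := by
  haveI : NeZero p := ⟨(Fact.out : p.Prime).ne_zero⟩
  rw [← pow_mul]
  refine pp_pow_modeq p s ?_
  have h : (((u : ZMod p).val * (v : ZMod p).val : ℕ) : ZMod p)
      = ((((u * v : (ZMod p)ˣ) : ZMod p)).val : ZMod p) := by
    push_cast
    rw [ZMod.natCast_val, ZMod.natCast_val, ZMod.natCast_val,
      ZMod.cast_id, ZMod.cast_id, ZMod.cast_id]
  exact (ZMod.natCast_eq_natCast_iff _ _ _).1 h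

lemma pp_pow_val_one (s : Pp p) : s ^ (((1 : (ZMod p)ˣ) : ZMod p)).val = s := by
  haveI : Fact (1 < p) := ⟨(Fact.out : p.Prime).one_lt⟩
  have h1 : ((1 : (ZMod p)ˣ) : ZMod p) = 1 := rfl
  rw [h1, ZMod.val_one _, pow_one]

lemma pp_pow_val_inj (t : (ZMod p)ˣ) :
    Function.Injective (fun s : Pp p => s ^ ((t : ZMod p)).val) := by
  intro a b hab
  have hab' : a ^ ((t : ZMod p)).val = b ^ ((t : ZMod p)).val := hab
  have h2 : (a ^ ((t : ZMod p)).val) ^ (((t⁻¹ : (ZMod p)ˣ) : ZMod p)).val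
      = (b ^ ((t : ZMod p)).val) ^ (((t⁻¹ : (ZMod p)ˣ) : ZMod p)).val := by rw [hab']
  rw [pp_pow_val_mul, pp_pow_val_mul, mul_inv_cancel, pp_pow_val_one, pp_pow_val_one] at h2
  exact h2

lemma pp_transitive {s s' : Pp p} (hs : s ≠ 1) (hs' : s' ≠ 1) :
    ∃ t : (ZMod p)ˣ, s ^ ((t : ZMod p)).val = s' := by
  haveI : NeZero p := ⟨(Fact.out : p.Prime).ne_zero⟩
  have hx : s.toAdd ≠ 0 := fun h => hs (by rw [← ofAdd_toAdd s, h, ofAdd_zero])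
  have hy : s'.toAdd ≠ 0 := fun h => hs' (by rw [← ofAdd_toAdd s', h, ofAdd_zero])
  have hq : s'.toAdd * (s.toAdd)⁻¹ ≠ 0 := mul_ne_zero hy (inv_ne_zero hx)
  refine ⟨Units.mk0 _ hq, ?_⟩
  have hval : ((Units.mk0 _ hq : (ZMod p)ˣ) : ZMod p) = s'.toAdd * (s.toAdd)⁻¹ := rfl
  rw [hval]
  have hcalc : ((s'.toAdd * (s.toAdd)⁻¹).val : ℕ) • s.toAdd = s'.toAdd := by
    rw [nsmul_eq_mul, ZMod.natCast_val, ZMod.cast_id]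
    field_simp
  have h3 := congrArg Multiplicative.ofAdd hcalc
  rw [ofAdd_nsmul, ofAdd_toAdd, ofAdd_toAdd] at h3
  exact h3

lemma psi_inj (t : (ZMod p)ˣ) : Function.Injective (ψ p t) := by
  intro g h hab
  unfold ψ at hab
  rw [Prod.mk.injEq] at hab
  exact Prod.ext hab.1 (pp_pow_val_inj p t hab.2)

lemma val_ne_zero_unit (t : (ZMod p)ˣ) : ((t : ZMod p)).val ≠ 0 := by
  haveI : NeZero p := ⟨(Fact.out : p.Prime).ne_zero⟩
  intro h0
  exact t.ne_zero ((ZMod.val_eq_zero _).1 h0)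

lemma not_dvd_of_modeq {n r m : ℕ} (h : m ≡ r [MOD n]) (hr : r % n ≠ 0) :
    ¬ n ∣ m := by
  rintro ⟨c, rfl⟩
  have h1 : r % n = (n * c) % n := h.symm
  rw [Nat.mul_mod_right] at h1
  exact hr h1

variable (A : SchurRing (Gp p))

lemma pair_pow_image_basic (hp : 3 < p) {r3 rp : ℕ} (h3 : r3 % 3 ≠ 0) (hrp : rp % p ≠ 0)
    {X : Set (Gp p)} (hX : X ∈ A.basicSets) :
    (fun g : Gp p => (g.1 ^ r3, g.2 ^ rp)) '' X ∈ A.basicSets := by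
  have hppr : p.Prime := Fact.out
  have hco3 : Nat.Coprime 3 p := by
    rw [Nat.coprime_primes (by norm_num) hppr]
    omega
  obtain ⟨m, hm⟩ := Nat.chineseRemainder hco3 r3 rp
  have hm3 : m ≡ r3 [MOD 3] := hm.1
  have hmp : m ≡ rp [MOD p] := hm.2
  have hcop : Nat.Coprime m (3 * p) := by
    refine Nat.Coprime.mul_right ?_ ?_
    · exact (Nat.coprime_comm.1 ((Nat.prime_three.coprime_iff_not_dvd).2
        (not_dvd_of_modeq hm3 h3)))
    · exact (Nat.coprime_comm.1 ((hppr.coprime_iff_not_dvd).2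
        (not_dvd_of_modeq hmp hrp)))
  have himg : (fun g : Gp p => g ^ m) '' X = (fun g : Gp p => (g.1 ^ r3, g.2 ^ rp)) '' X := by
    refine Set.image_congr fun g _ => ?_
    refine Prod.ext ?_ ?_
    · rw [Prod.pow_fst]
      exact pow_modeq_exp 3 (e9_pow3) hm3 g.1
    · rw [Prod.pow_snd]
      exact pp_pow_modeq p g.2 hmp
  rw [← himg]
  exact pow_image_basic A (3 * p) (gp_exp_lt p) (gp_exp p) hcop hX

lemma psi_image_basic (hp : 3 < p) (t : (ZMod p)ˣ) {X : Set (Gp p)} (hX : X ∈ A.basicSets) :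
    ψ p t '' X ∈ A.basicSets := by
  haveI : NeZero p := ⟨(Fact.out : p.Prime).ne_zero⟩
  have h := pair_pow_image_basic p A hp (r3 := 1) (rp := ((t : ZMod p)).val)
    (by norm_num) (by
      rw [Nat.mod_eq_of_lt (ZMod.val_lt _)]
      exact val_ne_zero_unit p t) hX
  have heq : (fun g : Gp p => (g.1 ^ 1, g.2 ^ ((t : ZMod p)).val)) '' X = ψ p t '' X := by
    refine Set.image_congr fun g _ => ?_
    rw [pow_one]
    rfl
  rwa [heq] at h

lemma iota_image_basic (hp : 3 < p) {X : Set (Gp p)} (hX : X ∈ A.basicSets) :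
    ι p '' X ∈ A.basicSets := by
  have hppr : p.Prime := Fact.out
  have h := pair_pow_image_basic p A hp (r3 := 2) (rp := 1)
    (by norm_num) (by rw [Nat.mod_eq_of_lt (by omega)]; norm_num) hX
  have heq : (fun g : Gp p => (g.1 ^ 2, g.2 ^ 1)) '' X = ι p '' X := by
    refine Set.image_congr fun g _ => ?_
    rw [pow_one, e9_sq]
    rfl
  rwa [heq] at h

end Specific

section Main

open Finset MonoidAlgebra

variable (p : ℕ) [Fact p.Prime]

/-- the subgroup `A × 1` as a set -/
def Abar : Set (Gp p) := {g | g.2 = 1}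
/-- the subgroup `1 × P` as a set -/
def Pbar : Set (Gp p) := {g | g.1 = 1}

/-- the fiber of `X` over `a` -/
def fib (X : Set (Gp p)) (a : E₉) : Set (Pp p) := {x | (a, x) ∈ X}

/-- the `Π_A(X)`-class of `a` -/
def cls (X : Set (Gp p)) (a : E₉) : Set E₉ :=
  {b ∈ Prod.fst '' X | fib p X b = fib p X a}

lemma abar_eq :
    (((⊤ : Subgroup E₉).prod (⊥ : Subgroup (Pp p))) : Set (Gp p)) = Abar p := by
  ext g
  simp [Abar, Subgroup.mem_prod]

lemma pbar_eq :
    (((⊥ : Subgroup E₉).prod (⊤ : Subgroup (Pp p))) : Set (Gp p)) = Pbar p := by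
  ext g
  simp [Pbar, Subgroup.mem_prod]

variable (A : SchurRing (Gp p))

lemma mem_cls_iff {X : Set (Gp p)} {a b : E₉} :
    b ∈ cls p X a ↔ b ∈ Prod.fst '' X ∧ fib p X b = fib p X a := Iff.rfl

lemma self_mem_cls {X : Set (Gp p)} {a : E₉} (ha : a ∈ Prod.fst '' X) :
    a ∈ cls p X a := ⟨ha, rfl⟩

lemma cls_eq_of_fib_eq {X : Set (Gp p)} {a b : E₉} (h : fib p X a = fib p X b) :
    cls p X a = cls p X b := by
  unfold cls
  ext c
  rw [Set.mem_setOf_eq, Set.mem_setOf_eq, h]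

lemma mem_fst_image {X : Set (Gp p)} {a : E₉} :
    a ∈ Prod.fst '' X ↔ ∃ w, (a, w) ∈ X := by
  constructor
  · rintro ⟨x, hx, rfl⟩
    exact ⟨x.2, hx⟩
  · rintro ⟨w, hw⟩
    exact ⟨(a, w), hw, rfl⟩

section Dichotomy

variable {X : Set (Gp p)}

lemma snd_ne_one (hd : X ∩ Abar p = ∅) {a : E₉} {s : Pp p} (h : (a, s) ∈ X) : s ≠ 1 := by
  intro h1
  have : (a, s) ∈ X ∩ Abar p := ⟨h, by simp [Abar, h1]⟩
  rw [hd] at this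
  exact this

/-- if `ψ t` fixes `X` then membership is `t`-stable fiberwise -/
lemma psi_fix_mem {t : (ZMod p)ˣ} (ht : ψ p t '' X = X) {a : E₉} {s : Pp p} :
    (a, s) ∈ X ↔ (a, s ^ ((t : ZMod p)).val) ∈ X := by
  constructor
  · intro h
    rw [← ht]
    exact ⟨(a, s), h, rfl⟩
  · intro h
    rw [← ht] at h
    obtain ⟨g, hg, hge⟩ := h
    have h1 : g.1 = a := congrArg Prod.fst hge
    have h2 : g.2 ^ ((t : ZMod p)).val = s ^ ((t : ZMod p)).val := congrArg Prod.snd hge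
    have h3 : g.2 = s := pp_pow_val_inj p t h2
    rwa [← h1, ← h3]

/-- two elements of a common fiber are related by a `ψ` fixing `X` -/
lemma fiber_rel (hX : X ∈ A.basicSets) (hd : X ∩ Abar p = ∅) (hp : 3 < p) {a : E₉} {s s' : Pp p}
    (h : (a, s) ∈ X) (h' : (a, s') ∈ X) :
    ∃ t : (ZMod p)ˣ, s ^ ((t : ZMod p)).val = s' ∧ ψ p t '' X = X := by
  obtain ⟨t, ht⟩ := pp_transitive p (snd_ne_one p hd h) (snd_ne_one p hd h')
  refine ⟨t, ht, ?_⟩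
  have hb : ψ p t '' X ∈ A.basicSets := psi_image_basic p A hp t hX
  have hmem : (a, s') ∈ ψ p t '' X := ⟨(a, s), h, by rw [← ht]; rfl⟩
  exact basic_eq_of_mem A hb hX hmem h'

/-- rows sharing one point have equal fibers -/
lemma fib_eq_of_common (hX : X ∈ A.basicSets) (hd : X ∩ Abar p = ∅) (hp : 3 < p) {a b : E₉} {s : Pp p}
    (ha : (a, s) ∈ X) (hb : (b, s) ∈ X) : fib p X a = fib p X b := by
  have key : ∀ u v : E₉, ∀ w : Pp p, (u, w) ∈ X → (v, w) ∈ X →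
      ∀ x, (u, x) ∈ X → (v, x) ∈ X := by
    intro u v w hu hv x hx
    obtain ⟨t, ht1, ht2⟩ := fiber_rel p A hX hd hp hu hx
    rw [← ht1]
    exact (psi_fix_mem p ht2).1 hv
  ext x
  exact ⟨fun hx => key a b s ha hb x hx, fun hx => key b a s hb ha x hx⟩

/-- classes are columns -/
lemma cls_eq_col (hX : X ∈ A.basicSets) (hd : X ∩ Abar p = ∅) (hp : 3 < p) {a : E₉} {s : Pp p} (h : (a, s) ∈ X) :
    cls p X a = {u : E₉ | (u, s) ∈ X} := by
  ext b
  constructor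
  · rintro ⟨hb, hfib⟩
    have : s ∈ fib p X b := by rw [hfib]; exact h
    exact this
  · intro hb
    refine ⟨mem_fst_image p |>.2 ⟨s, hb⟩, ?_⟩
    exact fib_eq_of_common p A hX hd hp hb h

end Dichotomy

end Main

section Inversion

open Finset MonoidAlgebra

variable (p : ℕ) [Fact p.Prime] (A : SchurRing (Gp p))
variable {X : Set (Gp p)}

/-- the key inversion relation -/
lemma iota_rel (hX : X ∈ A.basicSets) (hd : X ∩ Abar p = ∅) (hp : 3 < p)
    (hinv : (Prod.fst '' X)⁻¹ = Prod.fst '' X) :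
    ∃ t : (ZMod p)ˣ, ∀ c : E₉, ∀ x : Pp p,
      ((c, x) ∈ X ↔ (c⁻¹, x ^ ((t : ZMod p)).val) ∈ X) := by
  obtain ⟨g0, hg0⟩ := A.nonempty_mem X hX
  obtain ⟨a0, s0⟩ := g0
  have ha0 : a0 ∈ Prod.fst '' X := ⟨(a0, s0), hg0, rfl⟩
  have ha0' : a0⁻¹ ∈ Prod.fst '' X := by
    rw [← hinv, Set.mem_inv, inv_inv]
    exact ha0
  obtain ⟨s1, hs1⟩ := (mem_fst_image p).1 ha0'
  obtain ⟨t, ht⟩ := pp_transitive p (snd_ne_one p hd hg0) (snd_ne_one p hd hs1)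
  have hbasic : ψ p t '' (ι p '' X) ∈ A.basicSets :=
    psi_image_basic p A hp t (iota_image_basic p A hp hX)
  have hmem : (a0⁻¹, s1) ∈ ψ p t '' (ι p '' X) := by
    refine ⟨ι p (a0, s0), ⟨(a0, s0), hg0, rfl⟩, ?_⟩
    show (a0⁻¹, s0 ^ ((t : ZMod p)).val) = (a0⁻¹, s1)
    rw [ht]
  have heq : ψ p t '' (ι p '' X) = X := basic_eq_of_mem A hbasic hX hmem hs1
  refine ⟨t, fun c x => ?_⟩
  constructor
  · intro h
    rw [← heq]
    exact ⟨ι p (c, x), ⟨(c, x), h, rfl⟩, rfl⟩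
  · intro h
    rw [← heq] at h
    obtain ⟨g, hg, hge⟩ := h
    obtain ⟨g', hg', rfl⟩ := hg
    have h1 : g'.1⁻¹ = c⁻¹ := congrArg Prod.fst hge
    have h2 : g'.2 ^ ((t : ZMod p)).val = x ^ ((t : ZMod p)).val := congrArg Prod.snd hge
    have h3 : g'.1 = c := inv_injective h1
    have h4 : g'.2 = x := pp_pow_val_inj p t h2
    rwa [← h3, ← h4]

lemma fib_eq_inv_iff (hX : X ∈ A.basicSets) (hd : X ∩ Abar p = ∅) (hp : 3 < p)
    (hinv : (Prod.fst '' X)⁻¹ = Prod.fst '' X) :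
    ∀ c c' : E₉, fib p X c = fib p X c' ↔ fib p X c⁻¹ = fib p X c'⁻¹ := by
  obtain ⟨t, ht⟩ := iota_rel p A hX hd hp hinv
  have fwd : ∀ c c' : E₉, fib p X c = fib p X c' → fib p X c⁻¹ = fib p X c'⁻¹ := by
    intro c c' h
    ext x
    set y : Pp p := x ^ (((t⁻¹ : (ZMod p)ˣ) : ZMod p)).val with hy
    have hyx : y ^ ((t : ZMod p)).val = x := by
      rw [hy, pp_pow_val_mul, inv_mul_cancel, pp_pow_val_one]
    constructor
    · intro hx
      have : (c, y) ∈ X := by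
        rw [ht c y, hyx]
        exact hx
      have hy' : y ∈ fib p X c := this
      rw [h] at hy'
      have : (c'⁻¹, y ^ ((t : ZMod p)).val) ∈ X := (ht c' y).1 hy'
      rwa [hyx] at this
    · intro hx
      have : (c', y) ∈ X := by
        rw [ht c' y, hyx]
        exact hx
      have hy' : y ∈ fib p X c' := this
      rw [← h] at hy'
      have : (c⁻¹, y ^ ((t : ZMod p)).val) ∈ X := (ht c y).1 hy'
      rwa [hyx] at this
  refine fun c c' => ⟨fwd c c', fun h => ?_⟩
  have := fwd c⁻¹ c'⁻¹ h
  rwa [inv_inv, inv_inv] at this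

lemma mem_fst_inv_iff (hinv : (Prod.fst '' X)⁻¹ = Prod.fst '' X) (c : E₉) :
    c⁻¹ ∈ Prod.fst '' X ↔ c ∈ Prod.fst '' X := by
  conv_lhs => rw [← hinv]
  rw [Set.mem_inv, inv_inv]

lemma cls_inv (hX : X ∈ A.basicSets) (hd : X ∩ Abar p = ∅) (hp : 3 < p)
    (hinv : (Prod.fst '' X)⁻¹ = Prod.fst '' X) (a : E₉) :
    (cls p X a)⁻¹ = cls p X a⁻¹ := by
  ext c
  rw [Set.mem_inv, mem_cls_iff, mem_cls_iff]
  constructor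
  · rintro ⟨h1, h2⟩
    refine ⟨(mem_fst_inv_iff p hinv c).1 h1, ?_⟩
    have := (fib_eq_inv_iff p A hX hd hp hinv c⁻¹ a).1 h2
    rwa [inv_inv] at this
  · rintro ⟨h1, h2⟩
    refine ⟨by rwa [mem_fst_inv_iff p hinv c], ?_⟩
    have := (fib_eq_inv_iff p A hX hd hp hinv c a⁻¹).1 h2
    rwa [inv_inv] at this

end Inversion

section CountingBasics

open Finset MonoidAlgebra

lemma ncard_eq_fs {α : Type*} [Fintype α] (S : Set α) : S.ncard = (fs S).card := by
  have h : (↑(fs S) : Set α) = S := by ext x; simp [fs]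
  conv_lhs => rw [← h]
  rw [Set.ncard_coe_finset]

variable (p : ℕ) [Fact p.Prime]

/-- the column of `X` at `s` -/
noncomputable def colF (X : Set (Gp p)) (s : Pp p) : Finset E₉ :=
  univ.filter (fun u => (u, s) ∈ X)

/-- the row of `X` at `u` -/
noncomputable def fbF (X : Set (Gp p)) (u : E₉) : Finset (Pp p) :=
  univ.filter (fun w => (u, w) ∈ X)

/-- the coefficient count for `grpSum X * grpSum X⁻¹` -/
noncomputable def NfF (X : Set (Gp p)) (y : Gp p) : ℕ :=
  ((fs X).filter (fun x => y * x ∈ X)).card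

variable (A : SchurRing (Gp p)) {X : Set (Gp p)}

lemma mem_colF {X : Set (Gp p)} {s : Pp p} {u : E₉} : u ∈ colF p X s ↔ (u, s) ∈ X := by
  simp [colF]

lemma mem_fbF {X : Set (Gp p)} {u : E₉} {w : Pp p} : w ∈ fbF p X u ↔ (u, w) ∈ X := by
  simp [fbF]

lemma coeff_abar_mul (y : Gp p) :
    (grpSum (Abar p) * grpSum X).coeff y = ((colF p X y.2).card : ℤ) := by
  rw [_root_.coeff_mul]
  norm_cast
  refine Finset.card_bij' (fun x _ => x.1) (fun u _ => (u, y.2)) ?_ ?_ ?_ ?_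
  · intro x hx
    rw [Finset.mem_filter, mem_fs] at hx
    have h2 : y.2 * x.2⁻¹ = 1 := hx.2
    have h3 : x.2 = y.2 := (mul_inv_eq_one.1 h2).symm
    rw [mem_colF, ← h3]
    exact hx.1
  · intro u hu
    rw [mem_colF] at hu
    rw [Finset.mem_filter, mem_fs]
    refine ⟨hu, ?_⟩
    show y.2 * (y.2)⁻¹ = 1
    exact mul_inv_cancel y.2
  · intro x hx
    rw [Finset.mem_filter, mem_fs] at hx
    have h2 : y.2 * x.2⁻¹ = 1 := hx.2
    have h3 : x.2 = y.2 := (mul_inv_eq_one.1 h2).symm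
    exact Prod.ext rfl h3.symm
  · intro u hu
    rfl

lemma coeff_pbar_mul (y : Gp p) :
    (grpSum X * grpSum (Pbar p)).coeff y = ((fbF p X y.1).card : ℤ) := by
  rw [_root_.coeff_mul]
  norm_cast
  refine Finset.card_bij' (fun x _ => y.2 * x.2⁻¹) (fun w _ => ((1 : E₉), w⁻¹ * y.2))
    ?_ ?_ ?_ ?_
  · intro x hx
    rw [Finset.mem_filter, mem_fs] at hx
    have h1 : x.1 = 1 := hx.1
    have h2 : (y.1 * x.1⁻¹, y.2 * x.2⁻¹) ∈ X := hx.2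
    rw [mem_fbF]
    rw [h1] at h2
    simpa using h2
  · intro w hw
    rw [mem_fbF] at hw
    rw [Finset.mem_filter, mem_fs]
    constructor
    · show ((1 : E₉), w⁻¹ * y.2).1 = 1
      rfl
    · show (y.1 * 1⁻¹, y.2 * (w⁻¹ * y.2)⁻¹) ∈ X
      have h1 : y.1 * (1 : E₉)⁻¹ = y.1 := by group
      have h2 : y.2 * (w⁻¹ * y.2)⁻¹ = w := by group
      rw [h1, h2]
      exact hw
  · intro x hx
    rw [Finset.mem_filter, mem_fs] at hx
    have h1 : x.1 = 1 := hx.1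
    refine Prod.ext ?_ ?_
    · exact h1.symm
    · show (y.2 * x.2⁻¹)⁻¹ * y.2 = x.2
      group
  · intro w hw
    show y.2 * (w⁻¹ * y.2)⁻¹ = w
    group

lemma coeff_nf (y : Gp p) : (grpSum X * grpSum X⁻¹).coeff y = ((NfF p X y : ℕ) : ℤ) := by
  rw [coeff_mul_inv]
  rfl

lemma col_card_const (hX : X ∈ A.basicSets) (hdA : AClosed A (Abar p))
    {a b : E₉} {s s' : Pp p} (ha : (a, s) ∈ X) (hb : (b, s') ∈ X) :
    (colF p X s).card = (colF p X s').card := by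
  have hmem : grpSum (Abar p) * grpSum X ∈ Submodule.span ℤ (grpSum '' A.basicSets) :=
    span_mul_closed A (grpSum_mem_span_of_aclosed A hdA)
      (Submodule.subset_span (Set.mem_image_of_mem grpSum hX))
  have h := coeff_const A hmem hX ha hb
  rw [coeff_abar_mul, coeff_abar_mul] at h
  exact_mod_cast h

lemma row_card_const (hX : X ∈ A.basicSets) (hdP : AClosed A (Pbar p))
    {a b : E₉} {s s' : Pp p} (ha : (a, s) ∈ X) (hb : (b, s') ∈ X) :
    (fbF p X a).card = (fbF p X b).card := by
  have hmem : grpSum X * grpSum (Pbar p) ∈ Submodule.span ℤ (grpSum '' A.basicSets) :=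
    span_mul_closed A (Submodule.subset_span (Set.mem_image_of_mem grpSum hX))
      (grpSum_mem_span_of_aclosed A hdP)
  have h := coeff_const A hmem hX ha hb
  rw [coeff_pbar_mul, coeff_pbar_mul] at h
  exact_mod_cast h

lemma fbF_nonempty_iff {u : E₉} : (fbF p X u).Nonempty ↔ u ∈ Prod.fst '' X := by
  rw [mem_fst_image]
  constructor
  · rintro ⟨w, hw⟩
    exact ⟨w, mem_fbF p |>.1 hw⟩
  · rintro ⟨w, hw⟩
    exact ⟨w, mem_fbF p |>.2 hw⟩

/-- `W = X_A × P` is 𝒜-closed -/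
lemma w_closed (hX : X ∈ A.basicSets) (hdP : AClosed A (Pbar p)) :
    AClosed A {y : Gp p | y.1 ∈ Prod.fst '' X} := by
  intro Y hY
  by_cases hint : Y ∩ {y : Gp p | y.1 ∈ Prod.fst '' X} = ∅
  · exact Or.inr hint
  · left
    obtain ⟨g, hg⟩ := Set.nonempty_iff_ne_empty.2 hint
    intro h hh
    have hmem : grpSum X * grpSum (Pbar p) ∈ Submodule.span ℤ (grpSum '' A.basicSets) :=
      span_mul_closed A (Submodule.subset_span (Set.mem_image_of_mem grpSum hX))
        (grpSum_mem_span_of_aclosed A hdP)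
    have hcc := coeff_const A hmem hY hg.1 hh
    rw [coeff_pbar_mul, coeff_pbar_mul] at hcc
    have hgpos : 0 < (fbF p X g.1).card := Finset.card_pos.2 ((fbF_nonempty_iff p).2 hg.2)
    have hcard : (fbF p X g.1).card = (fbF p X h.1).card := by exact_mod_cast hcc
    rw [hcard] at hgpos
    show h.1 ∈ Prod.fst '' X
    rw [← fbF_nonempty_iff p]
    exact Finset.card_pos.1 hgpos

/-- the `m`-count -/
noncomputable def mcount (X : Set (Gp p)) (b : E₉) : ℕ :=
  ((fs X).filter (fun x => b * x.1 ∈ Prod.fst '' X)).card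

lemma coeff_w_mul (hX : X ∈ A.basicSets) (y : Gp p) :
    (grpSum {y' : Gp p | y'.1 ∈ Prod.fst '' X} * grpSum X⁻¹).coeff y = ((mcount p X y.1 : ℕ) : ℤ) := by
  rw [coeff_mul_inv]
  norm_cast

lemma mcount_const (hX : X ∈ A.basicSets) (hdP : AClosed A (Pbar p))
    {b b' : E₉} {s s' : Pp p} (hb : (b, s) ∈ X) (hb' : (b', s') ∈ X) :
    mcount p X b = mcount p X b' := by
  have hmem : grpSum {y' : Gp p | y'.1 ∈ Prod.fst '' X} * grpSum X⁻¹
      ∈ Submodule.span ℤ (grpSum '' A.basicSets) :=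
    span_mul_closed A (grpSum_mem_span_of_aclosed A (w_closed p A hX hdP))
      (Submodule.subset_span (Set.mem_image_of_mem grpSum (A.inv_mem X hX)))
  have h := coeff_const A hmem hX hb hb'
  rw [coeff_w_mul p A hX, coeff_w_mul p A hX] at h
  exact_mod_cast h

end CountingBasics

section Counting2

open Finset MonoidAlgebra

variable (p : ℕ) [Fact p.Prime] (A : SchurRing (Gp p)) {X : Set (Gp p)}

lemma pp_pow_exp_eq_one {s : Pp p} (hs : s ≠ 1) {u : (ZMod p)ˣ}
    (h : s ^ ((u : ZMod p)).val = s) : u = 1 := by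
  haveI : NeZero p := ⟨(Fact.out : p.Prime).ne_zero⟩
  have h1 := congrArg Multiplicative.toAdd h
  rw [toAdd_pow] at h1
  rw [nsmul_eq_mul, ZMod.natCast_val, ZMod.cast_id] at h1
  have hx : s.toAdd ≠ 0 := fun h0 => hs (by rw [← ofAdd_toAdd s, h0, ofAdd_zero])
  have h2 : ((u : ZMod p) - 1) * s.toAdd = 0 := by
    rw [sub_mul, one_mul, h1, sub_self]
  rcases mul_eq_zero.1 h2 with h3 | h3
  · exact Units.ext (sub_eq_zero.1 h3)
  · exact absurd h3 hx

lemma pp_pow_exp_inj {s : Pp p} (hs : s ≠ 1) {r r' : (ZMod p)ˣ}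
    (h : s ^ ((r : ZMod p)).val = s ^ ((r' : ZMod p)).val) : r = r' := by
  have h1 : (s ^ ((r : ZMod p)).val) ^ (((r'⁻¹ : (ZMod p)ˣ) : ZMod p)).val
      = (s ^ ((r' : ZMod p)).val) ^ (((r'⁻¹ : (ZMod p)ˣ) : ZMod p)).val := by rw [h]
  rw [pp_pow_val_mul, pp_pow_val_mul, mul_inv_cancel, pp_pow_val_one] at h1
  have h2 : r * r'⁻¹ = 1 := pp_pow_exp_eq_one p hs h1
  have := mul_eq_one_iff_eq_inv.1 h2
  rw [this, inv_inv]

lemma pp_pow_ne_one {s : Pp p} (hs : s ≠ 1) (r : (ZMod p)ˣ) :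
    s ^ ((r : ZMod p)).val ≠ 1 := by
  intro h
  have h1 : s ^ ((r : ZMod p)).val = (1 : Pp p) ^ ((r : ZMod p)).val := by
    rw [h, one_pow]
  exact hs (pp_pow_val_inj p r h1)

/-- the `φ`-count: rows in the same class as their `b`-translate -/
noncomputable def phiF (X : Set (Gp p)) (b : E₉) : ℕ :=
  (univ.filter (fun v : E₉ => v ∈ Prod.fst '' X ∧ b * v ∈ Prod.fst '' X ∧
    fib p X v = fib p X (b * v))).card

lemma total_eq (b : E₉) :
    ∑ w : Pp p, NfF p X (b, w) = ∑ x ∈ fs X, (fbF p X (b * x.1)).card := by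
  unfold NfF
  simp_rw [Finset.card_filter]
  rw [Finset.sum_comm]
  refine Finset.sum_congr rfl fun x hx => ?_
  rw [fbF, Finset.card_filter]
  refine Fintype.sum_equiv (Equiv.mulRight x.2) _ _ fun w => ?_
  rfl

lemma sum_rows_eq (hX : X ∈ A.basicSets) (hdP : AClosed A (Pbar p))
    {a₀ : E₉} {s₀ : Pp p} (h₀ : (a₀, s₀) ∈ X) (b : E₉) :
    ∑ x ∈ fs X, (fbF p X (b * x.1)).card = (fbF p X a₀).card * mcount p X b := by
  have hcase : ∀ x ∈ fs X, (fbF p X (b * x.1)).card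
      = if b * x.1 ∈ Prod.fst '' X then (fbF p X a₀).card else 0 := by
    intro x hx
    by_cases hb : b * x.1 ∈ Prod.fst '' X
    · rw [if_pos hb]
      obtain ⟨w, hw⟩ := (mem_fst_image p).1 hb
      exact row_card_const p A hX hdP hw h₀
    · rw [if_neg hb, Finset.card_eq_zero]
      rw [Finset.eq_empty_iff_forall_notMem]
      intro w hw
      exact hb ((mem_fst_image p).2 ⟨w, (mem_fbF p).1 hw⟩)
  rw [Finset.sum_congr rfl hcase, ← Finset.sum_filter, Finset.sum_const, smul_eq_mul,
    mul_comm]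
  rfl

lemma tail_const (hX : X ∈ A.basicSets) (hd : X ∩ Abar p = ∅) (hp : 3 < p)
    {b b' : E₉} {s₀ s₀' : Pp p} (h₀ : (b, s₀) ∈ X) (h₀' : (b', s₀') ∈ X) :
    ∑ w ∈ univ.erase (1 : Pp p), NfF p X (b, w)
      = ∑ w ∈ univ.erase (1 : Pp p), NfF p X (b', w) := by
  have hη : grpSum X * grpSum X⁻¹ ∈ Submodule.span ℤ (grpSum '' A.basicSets) :=
    A.mul_mem X hX X⁻¹ (A.inv_mem X hX)
  have hs₀ : s₀ ≠ 1 := snd_ne_one p hd h₀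
  have hs₀' : s₀' ≠ 1 := snd_ne_one p hd h₀'
  have key : ∀ r : (ZMod p)ˣ,
      NfF p X (b, s₀ ^ ((r : ZMod p)).val) = NfF p X (b', s₀' ^ ((r : ZMod p)).val) := by
    intro r
    have hb : ψ p r '' X ∈ A.basicSets := psi_image_basic p A hp r hX
    have hm1 : (b, s₀ ^ ((r : ZMod p)).val) ∈ ψ p r '' X := ⟨(b, s₀), h₀, rfl⟩
    have hm2 : (b', s₀' ^ ((r : ZMod p)).val) ∈ ψ p r '' X := ⟨(b', s₀'), h₀', rfl⟩
    have h := coeff_const A hη hb hm1 hm2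
    rw [coeff_nf, coeff_nf] at h
    exact_mod_cast h
  have bij : ∀ (s : Pp p), s ≠ 1 →
      ∀ (f : Pp p → ℕ), (∑ w ∈ univ.erase (1 : Pp p), f w)
        = ∑ r : (ZMod p)ˣ, f (s ^ ((r : ZMod p)).val) := by
    intro s hs f
    refine (Finset.sum_bij (s := (univ : Finset (ZMod p)ˣ)) (t := univ.erase (1 : Pp p))
      (f := fun r => f (s ^ ((r : ZMod p)).val)) (g := f)
      (fun r _ => s ^ ((r : ZMod p)).val) ?_ ?_ ?_ ?_).symm
    · intro r _
      rw [Finset.mem_erase]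
      exact ⟨pp_pow_ne_one p hs r, Finset.mem_univ _⟩
    · intro r _ r' _ h
      exact pp_pow_exp_inj p hs h
    · intro w hw
      rw [Finset.mem_erase] at hw
      obtain ⟨r, hr⟩ := pp_transitive p hs hw.1
      exact ⟨r, Finset.mem_univ r, hr⟩
    · intro r _
      rfl
  rw [bij s₀ hs₀ (fun w => NfF p X (b, w)), bij s₀' hs₀' (fun w => NfF p X (b', w))]
  exact Finset.sum_congr rfl fun r _ => key r

lemma n1_eq (hX : X ∈ A.basicSets) (hd : X ∩ Abar p = ∅) (hdP : AClosed A (Pbar p))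
    (hp : 3 < p) {a₀ : E₉} {s₀ : Pp p} (h₀ : (a₀, s₀) ∈ X) (b : E₉) :
    NfF p X (b, 1) = (fbF p X a₀).card * phiF p X b := by
  unfold NfF
  have hsplit : ((fs X).filter (fun x => ((b, (1 : Pp p)) * x) ∈ X)).card
      = ∑ v : E₉, ∑ w : Pp p, (if ((v, w) ∈ X ∧ (b * v, w) ∈ X) then 1 else 0) := by
    rw [Finset.card_filter]
    rw [fs, Finset.sum_filter]
    rw [Fintype.sum_prod_type]
    refine Finset.sum_congr rfl fun v _ => ?_
    refine Finset.sum_congr rfl fun w _ => ?_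
    have hcond : (((b, (1 : Pp p)) * (v, w)) ∈ X) ↔ ((b * v, w) ∈ X) := by
      have he : (b, (1 : Pp p)) * (v, w) = (b * v, w) := Prod.ext rfl (one_mul w)
      rw [he]
    by_cases h1 : (v, w) ∈ X
    · rw [if_pos h1]
      by_cases h2 : (b * v, w) ∈ X
      · rw [if_pos (hcond.2 h2), if_pos ⟨h1, h2⟩]
      · rw [if_neg (fun hh => h2 (hcond.1 hh)), if_neg (fun hh => h2 hh.2)]
    · rw [if_neg h1, if_neg (fun hh => h1 hh.1)]
  rw [hsplit]
  have hinner : ∀ v : E₉, (∑ w : Pp p, if ((v, w) ∈ X ∧ (b * v, w) ∈ X) then 1 else 0)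
      = if (v ∈ Prod.fst '' X ∧ b * v ∈ Prod.fst '' X ∧ fib p X v = fib p X (b * v))
        then (fbF p X a₀).card else 0 := by
    intro v
    by_cases hc : v ∈ Prod.fst '' X ∧ b * v ∈ Prod.fst '' X ∧ fib p X v = fib p X (b * v)
    · rw [if_pos hc]
      have hval : ∀ w : Pp p, ((v, w) ∈ X ∧ (b * v, w) ∈ X) ↔ (v, w) ∈ X := by
        intro w
        refine ⟨fun h => h.1, fun h => ⟨h, ?_⟩⟩
        have : w ∈ fib p X v := h
        rw [hc.2.2] at this
        exact this
      have hsum : (∑ w : Pp p, if ((v, w) ∈ X ∧ (b * v, w) ∈ X) then 1 else 0)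
          = ∑ w : Pp p, if (v, w) ∈ X then 1 else 0 :=
        Finset.sum_congr rfl fun w _ => if_congr (hval w) rfl rfl
      rw [hsum, ← Finset.card_filter]
      obtain ⟨w₀, hw₀⟩ := (mem_fst_image p).1 hc.1
      exact row_card_const p A hX hdP hw₀ h₀
    · rw [if_neg hc]
      rw [Finset.sum_eq_zero]
      intro w _
      rw [if_neg]
      rintro ⟨h1, h2⟩
      refine hc ⟨(mem_fst_image p).2 ⟨w, h1⟩, (mem_fst_image p).2 ⟨w, h2⟩, ?_⟩
      exact fib_eq_of_common p A hX hd hp h1 h2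
  rw [Finset.sum_congr rfl (fun v _ => hinner v), ← Finset.sum_filter,
    Finset.sum_const, smul_eq_mul, mul_comm]
  rfl

lemma phi_const (hX : X ∈ A.basicSets) (hd : X ∩ Abar p = ∅)
    (hdP : AClosed A (Pbar p)) (hp : 3 < p)
    {b b' : E₉} (hb : b ∈ Prod.fst '' X) (hb' : b' ∈ Prod.fst '' X) :
    phiF p X b = phiF p X b' := by
  obtain ⟨s, hbs⟩ := (mem_fst_image p).1 hb
  obtain ⟨s', hbs'⟩ := (mem_fst_image p).1 hb'
  set k := (fbF p X b).card with hk
  have hsplit : ∀ c : E₉, NfF p X (c, 1) + ∑ w ∈ univ.erase (1 : Pp p), NfF p X (c, w)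
      = ∑ w : Pp p, NfF p X (c, w) := by
    intro c
    exact Finset.add_sum_erase univ (fun w => NfF p X (c, w)) (Finset.mem_univ 1)
  have htot : ∀ c : E₉, ∑ w : Pp p, NfF p X (c, w) = k * mcount p X c := by
    intro c
    rw [total_eq, sum_rows_eq p A hX hdP hbs c]
  have hn1 : NfF p X (b, 1) = k * phiF p X b := n1_eq p A hX hd hdP hp hbs b
  have hn1' : NfF p X (b', 1) = k * phiF p X b' := n1_eq p A hX hd hdP hp hbs b'
  have htail := tail_const p A hX hd hp hbs hbs'
  have hm := mcount_const p A hX hdP hbs hbs'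
  have h1 := hsplit b
  have h2 := hsplit b'
  rw [htot b, hn1] at h1
  rw [htot b', hn1', ← hm, ← htail] at h2
  have hkphi : k * phiF p X b = k * phiF p X b' := by omega
  have hkpos : 0 < k := by
    rw [hk]
    exact Finset.card_pos.2 ⟨s, (mem_fbF p).2 hbs⟩
  exact Nat.eq_of_mul_eq_mul_left hkpos hkphi

end Counting2

section ClsSum

open Finset MonoidAlgebra

variable (p : ℕ) [Fact p.Prime] (A : SchurRing (Gp p)) {X : Set (Gp p)}

lemma cls_sum_card (b : E₉) :
    ∑ Y ∈ (Set.toFinite {T : Set E₉ | ∃ a ∈ Prod.fst '' X, T = cls p X a}).toFinset,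
      ((fs Y).filter (fun u => b * u ∈ Y)).card = phiF p X b := by
  have hterm : ∀ Y : Set E₉, ((fs Y).filter (fun u => b * u ∈ Y)).card
      = ∑ v : E₉, if (v ∈ Y ∧ b * v ∈ Y) then 1 else 0 := by
    intro Y
    rw [fs, Finset.filter_filter, Finset.card_filter]
  rw [Finset.sum_congr rfl fun Y _ => hterm Y, Finset.sum_comm]
  have hinner : ∀ v : E₉,
      (∑ Y ∈ (Set.toFinite {T : Set E₉ | ∃ a ∈ Prod.fst '' X, T = cls p X a}).toFinset,
        if (v ∈ Y ∧ b * v ∈ Y) then 1 else 0)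
      = if (v ∈ Prod.fst '' X ∧ b * v ∈ Prod.fst '' X ∧ fib p X v = fib p X (b * v))
        then 1 else 0 := by
    intro v
    rw [← Finset.card_filter]
    by_cases hc : v ∈ Prod.fst '' X ∧ b * v ∈ Prod.fst '' X ∧ fib p X v = fib p X (b * v)
    · rw [if_pos hc]
      have hfil : ((Set.toFinite {T : Set E₉ | ∃ a ∈ Prod.fst '' X, T = cls p X a}).toFinset.filter
          (fun Y => v ∈ Y ∧ b * v ∈ Y)) = {cls p X v} := by
        ext Y
        rw [Finset.mem_filter, Set.Finite.mem_toFinset, Finset.mem_singleton]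
        constructor
        · rintro ⟨⟨a, ha, rfl⟩, hv, hbv⟩
          exact cls_eq_of_fib_eq p hv.2.symm
        · rintro rfl
          exact ⟨⟨v, hc.1, rfl⟩, self_mem_cls p hc.1, ⟨hc.2.1, hc.2.2.symm⟩⟩
      rw [hfil, Finset.card_singleton]
    · rw [if_neg hc]
      rw [Finset.card_eq_zero, Finset.eq_empty_iff_forall_notMem]
      rintro Y hY
      rw [Finset.mem_filter, Set.Finite.mem_toFinset] at hY
      obtain ⟨⟨a, ha, rfl⟩, hv, hbv⟩ := hY
      refine hc ⟨hv.1, hbv.1, ?_⟩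
      rw [hv.2, hbv.2]
  rw [Finset.sum_congr rfl fun v _ => hinner v, ← Finset.card_filter]
  rfl

/-- in the degenerate case `X ⊆ A × 1` -/
lemma fib_all_one (hsub : X ⊆ Abar p) {a : E₉} (ha : a ∈ Prod.fst '' X) :
    fib p X a = {1} := by
  ext x
  constructor
  · intro hx
    have : ((a, x) : Gp p).2 = 1 := hsub hx
    exact this
  · intro hx
    obtain ⟨w, hw⟩ := (mem_fst_image p).1 ha
    have hw1 : w = 1 := hsub hw
    have hx1 : x = 1 := hx
    show (a, x) ∈ X
    rw [hx1, ← hw1]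
    exact hw

lemma cls_eq_fst (hsub : X ⊆ Abar p) {a : E₉} (ha : a ∈ Prod.fst '' X) :
    cls p X a = Prod.fst '' X := by
  ext b
  constructor
  · rintro ⟨hb, _⟩
    exact hb
  · intro hb
    exact ⟨hb, by rw [fib_all_one p hsub hb, fib_all_one p hsub ha]⟩

lemma case1_nf (hsub : X ⊆ Abar p) {c : E₉} (hc : c ∈ Prod.fst '' X) :
    NfF p X (c, 1) = ((fs (Prod.fst '' X)).filter
      (fun u => c * u ∈ Prod.fst '' X)).card := by
  have hmem1 : ∀ u : E₉, ((u, (1 : Pp p)) ∈ X) ↔ u ∈ Prod.fst '' X := by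
    intro u
    constructor
    · intro h
      exact ⟨(u, 1), h, rfl⟩
    · intro h
      have := fib_all_one p hsub h
      have h1 : (1 : Pp p) ∈ fib p X u := by rw [this]; rfl
      exact h1
  unfold NfF
  refine Finset.card_bij' (fun x _ => x.1) (fun u _ => (u, 1)) ?_ ?_ ?_ ?_
  · intro x hx
    rw [Finset.mem_filter, mem_fs] at hx
    rw [Finset.mem_filter, mem_fs]
    have hx2 : x.2 = 1 := hx.1 |> fun h => hsub h
    constructor
    · exact ⟨x, hx.1, rfl⟩
    · have : (c, (1 : Pp p)) * x = (c * x.1, x.2) := Prod.ext rfl (one_mul x.2)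
      have h2 := hx.2
      rw [this] at h2
      exact ⟨(c * x.1, x.2), h2, rfl⟩
  · intro u hu
    rw [Finset.mem_filter, mem_fs] at hu
    rw [Finset.mem_filter, mem_fs]
    refine ⟨(hmem1 u).2 hu.1, ?_⟩
    have : (c, (1 : Pp p)) * (u, (1 : Pp p)) = (c * u, 1) := Prod.ext rfl (one_mul 1)
    rw [this]
    exact (hmem1 (c * u)).2 hu.2
  · intro x hx
    rw [Finset.mem_filter, mem_fs] at hx
    have hx2 : x.2 = 1 := hsub hx.1
    exact Prod.ext rfl hx2.symm
  · intro u hu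
    rfl

end ClsSum

theorem fibre_equivalence_partition_is_regular (p : ℕ) [Fact p.Prime] (hp : 3 < p)
    (A : SchurRing (E₉ × Multiplicative (ZMod p)))
    -- 𝒜 is dense
    (hdenseA : A.IsASubgroup ((⊤ : Subgroup E₉).prod
        (⊥ : Subgroup (Multiplicative (ZMod p)))))
    (hdenseP : A.IsASubgroup ((⊥ : Subgroup E₉).prod
        (⊤ : Subgroup (Multiplicative (ZMod p)))))
    (X : Set (E₉ × Multiplicative (ZMod p))) (hX : X ∈ A.basicSets) :
    -- Π_A(X), the partition of X_A by a ∼ b ⇔ X(a) = X(b), is regular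
    IsRegularPartition (Prod.fst '' X)
      {T : Set E₉ | ∃ a ∈ Prod.fst '' X,
        T = {b ∈ Prod.fst '' X |
              {x : Multiplicative (ZMod p) | (b, x) ∈ X} =
              {x : Multiplicative (ZMod p) | (a, x) ∈ X}}}  := by
  have hppr : p.Prime := Fact.out
  -- density gives 𝒜-closedness of the two subgroups
  have hdA : AClosed A (Abar p) := by
    obtain ⟨T, hT, hE⟩ := hdenseA
    exact aclosed_of_isaset A ⟨T, hT, by rw [← abar_eq p]; exact hE⟩
  have hdP : AClosed A (Pbar p) := by
    obtain ⟨T, hT, hE⟩ := hdenseP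
    exact aclosed_of_isaset A ⟨T, hT, by rw [← pbar_eq p]; exact hE⟩
  refine ⟨?_, ?_, ?_, ?_⟩
  · -- (1) classes are nonempty subsets of X_A
    rintro Y ⟨a, ha, rfl⟩
    exact ⟨fun b hb => hb.1, ⟨a, ha, rfl⟩⟩
  · -- (2) the classes partition X_A
    intro x hx
    refine ⟨cls p X x, ⟨⟨x, hx, rfl⟩, self_mem_cls p hx⟩, ?_⟩
    rintro Y ⟨⟨a, ha, rfl⟩, hxY⟩
    have hxY' : x ∈ cls p X a := hxY
    exact cls_eq_of_fib_eq p hxY'.2.symm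
  · -- (3) uniformity
    rintro Y ⟨a, ha, rfl⟩ Z ⟨b, hb, rfl⟩
    show (cls p X a).ncard = (cls p X b).ncard
    rcases hdA X hX with hsub | hd
    · rw [cls_eq_fst p hsub ha, cls_eq_fst p hsub hb]
    · obtain ⟨s, has⟩ := (mem_fst_image p).1 ha
      obtain ⟨s', hbs⟩ := (mem_fst_image p).1 hb
      rw [cls_eq_col p A hX hd hp has, cls_eq_col p A hX hd hp hbs,
        ncard_eq_fs, ncard_eq_fs]
      have h1 : fs {u : E₉ | (u, s) ∈ X} = colF p X s := by
        ext u; simp [fs, colF]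
      have h2 : fs {u : E₉ | (u, s') ∈ X} = colF p X s' := by
        ext u; simp [fs, colF]
      rw [h1, h2]
      exact col_card_const p A hX hdA has hbs
  · -- (4) the inverse-closed case
    intro hinv
    rcases hdA X hX with hsub | hd
    · -- degenerate case `X ⊆ A × 1`
      obtain ⟨x0, hx0⟩ := A.nonempty_mem X hX
      have h0 : x0.1 ∈ Prod.fst '' X := ⟨x0, hx0, rfl⟩
      have hPone : {T : Set E₉ | ∃ a ∈ Prod.fst '' X,
          T = {b ∈ Prod.fst '' X |
                {x : Multiplicative (ZMod p) | (b, x) ∈ X} =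
                {x : Multiplicative (ZMod p) | (a, x) ∈ X}}}
          = {Prod.fst '' X} := by
        ext T
        rw [Set.mem_singleton_iff]
        constructor
        · rintro ⟨a, ha, rfl⟩
          exact cls_eq_fst p hsub ha
        · intro hT
          refine ⟨x0.1, h0, ?_⟩
          rw [hT]
          exact (cls_eq_fst p hsub h0).symm
      rw [hPone]
      have hmem1 : ∀ u : E₉, u ∈ Prod.fst '' X → ((u, (1 : Pp p)) ∈ X) := by
        intro u hu
        have hf := fib_all_one p hsub hu
        have h1 : (1 : Pp p) ∈ fib p X u := by rw [hf]; rfl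
        exact h1
      refine ⟨?_, ?_, ?_⟩
      · rw [Set.image_singleton]
        exact congrArg (fun S => ({S} : Set (Set E₉))) hinv
      · left
        intro Y hY
        rw [Set.mem_singleton_iff] at hY
        rw [hY]
        exact hinv
      · rw [finsum_mem_singleton]
        refine ⟨((fs (Prod.fst '' X)).filter
          (fun u => x0.1 * u ∈ Prod.fst '' X)).card, ?_⟩
        have hη : grpSum X * grpSum X⁻¹ ∈ Submodule.span ℤ (grpSum '' A.basicSets) :=
          A.mul_mem X hX X⁻¹ (A.inv_mem X hX)
        ext c
        rw [hadamard, MonoidAlgebra.coeff_ofCoeff, Finsupp.zipWith_apply, MonoidAlgebra.coeff_smul, Finsupp.smul_apply, grpSum_apply, smul_eq_mul]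
        by_cases hcS : c ∈ Prod.fst '' X
        · rw [if_pos hcS, one_mul, mul_one, coeff_mul_inv]
          have hcc := coeff_const A hη hX (hmem1 c hcS) (hmem1 x0.1 h0)
          rw [coeff_nf, coeff_nf] at hcc
          have e1 := case1_nf p hsub hcS
          have e2 := case1_nf p hsub h0
          have : NfF p X (c, 1) = NfF p X (x0.1, 1) := by exact_mod_cast hcc
          rw [e1, e2] at this
          exact_mod_cast this
        · rw [if_neg hcS, zero_mul, mul_zero]
    · -- main case: `X` is disjoint from `A × 1`
      obtain ⟨x0, hx0⟩ := A.nonempty_mem X hX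
      have h0 : x0.1 ∈ Prod.fst '' X := ⟨x0, hx0, rfl⟩
      refine ⟨?_, ?_, ?_⟩
      · -- (R1)
        apply Set.eq_of_subset_of_subset
        · rintro T ⟨Y, ⟨a, ha, rfl⟩, rfl⟩
          refine ⟨a⁻¹, (mem_fst_inv_iff p hinv a).2 ha, ?_⟩
          exact cls_inv p A hX hd hp hinv a
        · rintro T ⟨a, ha, rfl⟩
          refine ⟨cls p X a⁻¹, ⟨a⁻¹, (mem_fst_inv_iff p hinv a).2 ha, rfl⟩, ?_⟩
          show (cls p X a⁻¹)⁻¹ = cls p X a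
          rw [cls_inv p A hX hd hp hinv a⁻¹, inv_inv]
      · -- (R2)
        by_cases hall : ∀ c : E₉, fib p X c⁻¹ = fib p X c
        · left
          rintro Y ⟨a, ha, rfl⟩
          show (cls p X a)⁻¹ = cls p X a
          rw [cls_inv p A hX hd hp hinv a]
          exact cls_eq_of_fib_eq p (hall a)
        · right
          rintro Y ⟨a, ha, rfl⟩ heq
          apply hall
          have heq' : (cls p X a)⁻¹ = cls p X a := heq
          have h1 : cls p X a⁻¹ = cls p X a := by
            rw [← cls_inv p A hX hd hp hinv a]
            exact heq'
          have ha' : a ∈ cls p X a⁻¹ := by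
            rw [h1]
            exact self_mem_cls p ha
          have hfa : fib p X a = fib p X a⁻¹ := ha'.2
          obtain ⟨t, ht⟩ := iota_rel p A hX hd hp hinv
          obtain ⟨s, has⟩ := (mem_fst_image p).1 ha
          have has' : (a⁻¹, s) ∈ X := by
            have hm : s ∈ fib p X a⁻¹ := by rw [← hfa]; exact has
            exact hm
          have hasT : (a⁻¹, s ^ ((t : ZMod p)).val) ∈ X := (ht a s).1 has
          have hpsiX : ψ p t '' X = X := by
            have hb : ψ p t '' X ∈ A.basicSets := psi_image_basic p A hp t hX
            exact basic_eq_of_mem A hb hX ⟨(a⁻¹, s), has', rfl⟩ hasT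
          intro c
          ext x
          constructor
          · intro hx
            have h2 : (c⁻¹, x ^ ((t : ZMod p)).val) ∈ X := (psi_fix_mem p hpsiX).1 hx
            exact (ht c x).2 h2
          · intro hx
            have h2 : (c⁻¹, x ^ ((t : ZMod p)).val) ∈ X := (ht c x).1 hx
            exact (psi_fix_mem p hpsiX).2 h2
      · -- (R3)
        refine ⟨phiF p X x0.1, ?_⟩
        have hset : {T : Set E₉ | ∃ a ∈ Prod.fst '' X,
            T = {b ∈ Prod.fst '' X |
                  {x : Multiplicative (ZMod p) | (b, x) ∈ X} =
                  {x : Multiplicative (ZMod p) | (a, x) ∈ X}}}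
            = ↑((Set.toFinite {T : Set E₉ | ∃ a ∈ Prod.fst '' X,
                T = cls p X a}).toFinset) :=
          (Set.Finite.coe_toFinset _).symm
        rw [hset, finsum_mem_coe_finset]
        ext c
        rw [hadamard, MonoidAlgebra.coeff_ofCoeff, Finsupp.zipWith_apply, MonoidAlgebra.coeff_smul, Finsupp.smul_apply, grpSum_apply, smul_eq_mul]
        rw [MonoidAlgebra.coeff_sum, Finset.sum_apply']
        have hterm : ∀ Y ∈ (Set.toFinite {T : Set E₉ | ∃ a ∈ Prod.fst '' X,
            T = cls p X a}).toFinset,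
            (grpSum Y * grpSum Y⁻¹).coeff c
              = (((fs Y).filter (fun u => c * u ∈ Y)).card : ℤ) :=
          fun Y _ => coeff_mul_inv Y Y c
        rw [Finset.sum_congr rfl hterm, ← Nat.cast_sum, cls_sum_card p c]
        by_cases hcS : c ∈ Prod.fst '' X
        · rw [if_pos hcS, one_mul, mul_one]
          exact_mod_cast phi_const p A hX hd hdP hp hcS h0
        · rw [if_neg hcS, zero_mul, mul_zero]
end
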